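/- arXiv:1112.2351 — 3 statements merged into one kernel-verified Lean document; each statement's English description precedes it below -/
import Mathlib

section
/- Let p, r : [0,1] → ℝ be continuous with p(x) > 0 and r(x) > 0 for all x ∈ [0,1], let α ≥ 0, and let f : [0,1] → ℝ be continuous. Let y ∈ C²([0,1],ℝ) with p·y'' ∈ C²([0,1],ℝ) satisfy (p·y'')''(x) = r(x)·f(x) for all x ∈ [0,1] and the boundary conditions y(0) = y'(0) = y'(1) = 0 and (p·y'')'(1) + α·f(1) = 0. If y has at least n sign changes on (0,1), then f has at least n sign changes on (0,1). -/
open Set Filter Topology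

/-- Derivative within the interval `[0,1]`. -/
noncomputable def Dv (y : ℝ → ℝ) : ℝ → ℝ := derivWithin y (Set.Icc 0 1)

/-- `g` has at least `n` sign changes on `(0,1)`: there exist points
`0 < x₁ < … < x_{n+1} < 1` with `g(x_k) * g(x_{k+1}) < 0` for all `k`. -/
def SignChanges (g : ℝ → ℝ) (n : ℕ) : Prop :=
  ∃ x : Fin (n + 1) → ℝ, StrictMono x ∧ (∀ k, x k ∈ Set.Ioo (0:ℝ) 1) ∧
    ∀ k : Fin n, g (x k.castSucc) * g (x k.succ) < 0

/-! ### Auxiliary sign lemmas -/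

private lemma sign_mul_aux {d1 d2 A B : ℝ} (h1 : 0 < d1 * A) (h2 : 0 < d2 * B)
    (hAB : A * B < 0) : d1 * d2 < 0 := by
  nlinarith [mul_pos h1 h2]

private lemma sign_aux2 {d a b : ℝ} (h1 : 0 < d * a) (h2 : a * b < 0) : d * b < 0 := by
  nlinarith [sq_nonneg a, mul_pos h1 h1]

private lemma sign_aux3 {a b X : ℝ} (h1 : 0 < a * X) (h2 : b * X < 0) : a * b < 0 := by
  nlinarith [sq_nonneg X]

private lemma sign_aux4 {rr a b : ℝ} (h : rr * a * b < 0) (hrr : 0 < rr) : a * b < 0 := by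
  nlinarith

private lemma sign_aux5 {rr a b : ℝ} (h : 0 < rr * a * b) (hrr : 0 < rr) : 0 < a * b := by
  nlinarith

private lemma sign_aux6 {ra rb a b : ℝ} (h : (ra * a) * (rb * b) < 0)
    (hra : 0 < ra) (hrb : 0 < rb) : a * b < 0 := by
  nlinarith [mul_pos hra hrb]

/-- Alternating sign points for `g`, as a sequence. -/
def AltOn (g : ℝ → ℝ) (t : ℕ → ℝ) (m : ℕ) : Prop :=
  (∀ i, i < m → t i ∈ Ioo (0:ℝ) 1) ∧ (∀ i, i + 1 < m → t i < t (i+1)) ∧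
    (∀ i, i + 1 < m → g (t i) * g (t (i+1)) < 0)

lemma dv_hasDerivAt {g : ℝ → ℝ} (hg : DifferentiableOn ℝ g (Icc 0 1)) {x : ℝ}
    (hx : x ∈ Ioo (0:ℝ) 1) : HasDerivAt g (Dv g x) x := by
  have hmem : Icc (0:ℝ) 1 ∈ 𝓝 x := Icc_mem_nhds hx.1 hx.2
  have hd := (hg x (Ioo_subset_Icc_self hx)).differentiableAt hmem
  rw [Dv, derivWithin_of_mem_nhds hmem]
  exact hd.hasDerivAt

lemma mvt_sign {g : ℝ → ℝ} (hg : DifferentiableOn ℝ g (Icc 0 1))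
    (hgc : ContinuousOn g (Icc 0 1)) {a b : ℝ} (ha : 0 ≤ a) (hb : b ≤ 1) (hab : a < b)
    (hne : g a ≠ g b) : ∃ c ∈ Ioo a b, 0 < Dv g c * (g b - g a) := by
  obtain ⟨c, hc, hceq⟩ := exists_hasDerivAt_eq_slope g (Dv g) hab
    (hgc.mono (Icc_subset_Icc ha hb))
    (fun x hx => dv_hasDerivAt hg ⟨lt_of_le_of_lt ha hx.1, lt_of_lt_of_le hx.2 hb⟩)
  refine ⟨c, hc, ?_⟩
  rw [hceq, div_mul_eq_mul_div, ← pow_two]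
  exact div_pos (pow_two_pos_of_ne_zero (sub_ne_zero.mpr hne.symm)) (sub_pos.mpr hab)

/-- MVT step: between consecutive alternating points of `g` we find points where `Dv g`
has the sign of the right value of `g`. -/
lemma alt_step {g : ℝ → ℝ} {t : ℕ → ℝ} {m : ℕ}
    (hg : DifferentiableOn ℝ g (Icc 0 1)) (hgc : ContinuousOn g (Icc 0 1))
    (h : AltOn g t m) :
    ∃ u : ℕ → ℝ, ∀ i, i + 1 < m →
      u i ∈ Ioo (t i) (t (i+1)) ∧ 0 < Dv g (u i) * g (t (i+1)) := by
  have H : ∀ i, ∃ c, i + 1 < m → c ∈ Ioo (t i) (t (i+1)) ∧ 0 < Dv g c * g (t (i+1)) := by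
    intro i
    by_cases hi : i + 1 < m
    · have h0 := h.1 i (by omega)
      have h1 := h.1 (i+1) hi
      have hlt := h.2.1 i hi
      have halt := h.2.2 i hi
      have hne : g (t i) ≠ g (t (i+1)) := by
        intro hE; rw [hE] at halt; nlinarith [mul_self_nonneg (g (t (i+1)))]
      obtain ⟨c, hc, hcpos⟩ := mvt_sign hg hgc (le_of_lt h0.1) (le_of_lt h1.2) hlt hne
      have hB2 : 0 < (g (t (i+1)) - g (t i)) * g (t (i+1)) := by
        nlinarith [sq_nonneg (g (t (i+1)))]
      refine ⟨c, fun _ => ⟨hc, ?_⟩⟩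
      nlinarith [mul_pos hcpos hB2, sq_nonneg (g (t (i+1)) - g (t i))]
    · exact ⟨0, fun hi' => absurd hi' hi⟩
  choose u hu using H
  exact ⟨u, hu⟩

lemma alt_of_between {G g : ℝ → ℝ} {t u : ℕ → ℝ} {m : ℕ} (h : AltOn g t m)
    (hu : ∀ i, i + 1 < m → u i ∈ Ioo (t i) (t (i+1)) ∧ 0 < G (u i) * g (t (i+1))) :
    AltOn G u (m - 1) := by
  refine ⟨?_, ?_, ?_⟩
  · intro i hi
    have h1 := (hu i (by omega)).1
    have m0 := h.1 i (by omega); have m1 := h.1 (i+1) (by omega)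
    exact ⟨lt_trans m0.1 h1.1, lt_trans h1.2 m1.2⟩
  · intro i hi
    have h1 := (hu i (by omega)).1; have h2 := (hu (i+1) (by omega)).1
    exact lt_trans h1.2 h2.1
  · intro i hi
    exact sign_mul_aux (hu i (by omega)).2 (hu (i+1) (by omega)).2 (h.2.2 (i+1) (by omega))

lemma alt_prepend {g : ℝ → ℝ} {t : ℕ → ℝ} {m : ℕ} {c : ℝ} (hm : 1 ≤ m)
    (h : AltOn g t m) (hc : c ∈ Ioo (0:ℝ) (t 0)) (hsgn : g c * g (t 0) < 0) :
    AltOn g (fun i => if i = 0 then c else t (i-1)) (m+1) := by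
  refine ⟨?_, ?_, ?_⟩
  · intro i hi
    rcases Nat.eq_zero_or_pos i with rfl | hpos
    · simpa using ⟨hc.1, lt_trans hc.2 (h.1 0 hm).2⟩
    · obtain ⟨j, rfl⟩ : ∃ j, i = j + 1 := ⟨i - 1, by omega⟩
      simpa using h.1 j (by omega)
  · intro i hi
    rcases Nat.eq_zero_or_pos i with rfl | hpos
    · simpa using hc.2
    · obtain ⟨j, rfl⟩ : ∃ j, i = j + 1 := ⟨i - 1, by omega⟩
      simpa using h.2.1 j (by omega)
  · intro i hi
    rcases Nat.eq_zero_or_pos i with rfl | hpos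
    · simpa using hsgn
    · obtain ⟨j, rfl⟩ : ∃ j, i = j + 1 := ⟨i - 1, by omega⟩
      simpa using h.2.2 j (by omega)

lemma alt_append {g : ℝ → ℝ} {t : ℕ → ℝ} {m : ℕ} {c : ℝ} (hm : 1 ≤ m)
    (h : AltOn g t m) (hc : c ∈ Ioo (t (m-1)) 1) (hsgn : g (t (m-1)) * g c < 0) :
    AltOn g (fun i => if i = m then c else t i) (m+1) := by
  refine ⟨?_, ?_, ?_⟩
  · intro i hi
    by_cases hiE : i = m
    · subst hiE
      have := h.1 (i-1) (by omega)
      simpa using ⟨lt_trans this.1 hc.1, hc.2⟩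
    · simpa [hiE] using h.1 i (by omega)
  · intro i hi
    by_cases hiE : i + 1 = m
    · have hi' : i = m - 1 := by omega
      have hne : i ≠ m := by omega
      simp only [hne, hiE, if_neg, if_pos, if_false]
      rw [hi']
      have := h.1 (m-1) (by omega)
      exact hc.1
    · have h1 : i ≠ m := by omega
      simp only [h1, hiE, if_false]
      exact h.2.1 i (by omega)
  · intro i hi
    by_cases hiE : i + 1 = m
    · have hi' : i = m - 1 := by omega
      have hne : i ≠ m := by omega
      simp only [hne, hiE, if_neg, if_pos, if_false]
      rw [hi']
      exact hsgn
    · have h1 : i ≠ m := by omega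
      simp only [h1, hiE, if_false]
      exact h.2.2 i (by omega)

lemma signChanges_of_altOn {f : ℝ → ℝ} {s : ℕ → ℝ} {n : ℕ} (h : AltOn f s (n+1)) :
    SignChanges f n := by
  refine ⟨fun k => s k.val, Fin.strictMono_iff_lt_succ.mpr fun i => ?_,
    fun k => h.1 k.val k.isLt, fun k => ?_⟩
  · simpa using h.2.1 i.val (by omega)
  · simpa using h.2.2 k.val (by omega)

theorem stmt_7 (p r f y : ℝ → ℝ) (alpha : ℝ) (n : ℕ)
    (hpc : ContinuousOn p (Icc 0 1)) (hrc : ContinuousOn r (Icc 0 1))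
    (hp : ∀ x ∈ Icc (0:ℝ) 1, 0 < p x) (hr : ∀ x ∈ Icc (0:ℝ) 1, 0 < r x)
    (halpha : 0 ≤ alpha)
    (hfc : ContinuousOn f (Icc 0 1))
    (hy : ContDiffOn ℝ 2 y (Icc 0 1))
    (hpy : ContDiffOn ℝ 2 (fun x => p x * Dv (Dv y) x) (Icc 0 1))
    (heq : ∀ x ∈ Icc (0:ℝ) 1, Dv (Dv (fun t => p t * Dv (Dv y) t)) x = r x * f x)
    (hbc : y 0 = 0 ∧ Dv y 0 = 0 ∧ Dv y 1 = 0 ∧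
      Dv (fun t => p t * Dv (Dv y) t) 1 + alpha * f 1 = 0)
    (hsc : SignChanges y n) :
    SignChanges f n := by
  obtain ⟨hbc0, hbc1, hbc2, hbc3⟩ := hbc
  rcases Nat.eq_zero_or_pos n with rfl | hn
  · exact ⟨fun _ => (1:ℝ)/2,
      fun a b hab => absurd (Fin.lt_def.mp hab) (by have := a.isLt; have := b.isLt; omega),
      fun _ => ⟨by norm_num, by norm_num⟩, fun k => k.elim0⟩
  set w : ℝ → ℝ := fun x => p x * Dv (Dv y) x with hwdef
  have hn' : 1 ≤ n := hn
  have udiff : UniqueDiffOn ℝ (Icc (0:ℝ) 1) := uniqueDiffOn_Icc_zero_one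
  have hy_d : DifferentiableOn ℝ y (Icc 0 1) := hy.differentiableOn two_ne_zero
  have hy_c : ContinuousOn y (Icc 0 1) := hy.continuousOn
  have hy1 : ContDiffOn ℝ 1 (Dv y) (Icc 0 1) := hy.derivWithin udiff (by norm_num)
  have hy1_d : DifferentiableOn ℝ (Dv y) (Icc 0 1) := hy1.differentiableOn one_ne_zero
  have hy1_c : ContinuousOn (Dv y) (Icc 0 1) := hy1.continuousOn
  have hw_d : DifferentiableOn ℝ w (Icc 0 1) := hpy.differentiableOn two_ne_zero
  have hw_c : ContinuousOn w (Icc 0 1) := hpy.continuousOn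
  have hw1 : ContDiffOn ℝ 1 (Dv w) (Icc 0 1) := hpy.derivWithin udiff (by norm_num)
  have hw1_d : DifferentiableOn ℝ (Dv w) (Icc 0 1) := hw1.differentiableOn one_ne_zero
  have hw1_c : ContinuousOn (Dv w) (Icc 0 1) := hw1.continuousOn
  -- Level 0 : alternating points of y
  obtain ⟨t0, ht0⟩ : ∃ T, AltOn y T (n+1) := by
    obtain ⟨x, hxmono, hxmem, hxalt⟩ := hsc
    refine ⟨fun i => x ⟨min i n, by omega⟩, fun i _ => hxmem _, fun i hi => ?_, fun i hi => ?_⟩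
    · exact hxmono (by simp only [Fin.lt_def]; omega)
    · have := hxalt ⟨i, by omega⟩
      simp only [Fin.castSucc_mk, Fin.succ_mk] at this
      simpa [Nat.min_eq_left (by omega : i ≤ n), Nat.min_eq_left (by omega : i+1 ≤ n)]
        using this
  -- Level 1 : alternating points of Dv y (using y 0 = 0)
  obtain ⟨u0, hu0⟩ := alt_step hy_d hy_c ht0
  have base1 : AltOn (Dv y) u0 n := by
    have := alt_of_between ht0 hu0
    rwa [Nat.add_sub_cancel] at this
  have ht00 := ht0.1 0 (by omega)
  have hy00 : y (t0 0) ≠ 0 := by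
    intro hE
    have := ht0.2.2 0 (by omega)
    rw [hE] at this; simp at this
  obtain ⟨c0, hc0mem, hc0⟩ := mvt_sign hy_d hy_c le_rfl (le_of_lt ht00.2) ht00.1
    (by rw [hbc0]; exact fun hE => hy00 hE.symm)
  rw [hbc0, sub_zero] at hc0
  have hu00 := hu0 0 (by omega)
  have hsgn1 : Dv y c0 * Dv y (u0 0) < 0 :=
    sign_mul_aux hc0 hu00.2 (ht0.2.2 0 (by omega))
  obtain ⟨t1, ht1⟩ : ∃ T, AltOn (Dv y) T (n+1) :=
    ⟨_, alt_prepend hn' base1 ⟨hc0mem.1, lt_trans hc0mem.2 hu00.1.1⟩ hsgn1⟩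
  -- Level 2 : alternating points of Dv (Dv y) (using Dv y 0 = 0 and Dv y 1 = 0)
  obtain ⟨u1, hu1⟩ := alt_step hy1_d hy1_c ht1
  have base2 : AltOn (Dv (Dv y)) u1 n := by
    have := alt_of_between ht1 hu1
    rwa [Nat.add_sub_cancel] at this
  have ht10 := ht1.1 0 (by omega)
  have hdy0 : Dv y (t1 0) ≠ 0 := by
    intro hE
    have := ht1.2.2 0 (by omega)
    rw [hE] at this; simp at this
  obtain ⟨c1, hc1mem, hc1⟩ := mvt_sign hy1_d hy1_c le_rfl (le_of_lt ht10.2) ht10.1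
    (by rw [hbc1]; exact fun hE => hdy0 hE.symm)
  rw [hbc1, sub_zero] at hc1
  have hu10 := hu1 0 (by omega)
  have hsgn2 : Dv (Dv y) c1 * Dv (Dv y) (u1 0) < 0 :=
    sign_mul_aux hc1 hu10.2 (ht1.2.2 0 (by omega))
  have ht2a : AltOn (Dv (Dv y)) (fun i => if i = 0 then c1 else u1 (i-1)) (n+1) :=
    alt_prepend hn' base2 ⟨hc1mem.1, lt_trans hc1mem.2 hu10.1.1⟩ hsgn2
  -- append a point near 1 using Dv y 1 = 0
  have ht1n := ht1.1 n (by omega)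
  have hdyn : Dv y (t1 n) ≠ 0 := by
    intro hE
    have := ht1.2.2 (n-1) (by omega)
    rw [show n - 1 + 1 = n from by omega, hE] at this; simp at this
  obtain ⟨c2, hc2mem, hc2⟩ := mvt_sign hy1_d hy1_c (le_of_lt ht1n.1) le_rfl ht1n.2
    (fun hE => hdyn (hE.trans hbc2))
  rw [hbc2, zero_sub] at hc2
  have hu1last := hu1 (n-1) (by omega)
  rw [show n - 1 + 1 = n from by omega] at hu1last
  have hlastsgn : Dv (Dv y) (u1 (n-1)) * Dv (Dv y) c2 < 0 :=
    sign_mul_aux hu1last.2 hc2 (by nlinarith [mul_self_pos.mpr hdyn])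
  have ht2an : (fun i => if i = 0 then c1 else u1 (i-1)) ((n+1)-1) = u1 (n-1) := by
    simp only [Nat.add_sub_cancel]
    rw [if_neg (by omega)]
  have hmemapp : c2 ∈ Ioo ((fun i => if i = 0 then c1 else u1 (i-1)) ((n+1)-1)) 1 := by
    rw [ht2an]
    exact ⟨lt_trans hu1last.1.2 hc2mem.1, hc2mem.2⟩
  have hsgnapp : Dv (Dv y) ((fun i => if i = 0 then c1 else u1 (i-1)) ((n+1)-1)) *
      Dv (Dv y) c2 < 0 := by
    rw [ht2an]; exact hlastsgn
  obtain ⟨t2, ht2⟩ : ∃ T, AltOn (Dv (Dv y)) T (n+2) :=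
    ⟨_, alt_append (by omega) ht2a hmemapp hsgnapp⟩
  -- Level 3 : alternating points of w = p * Dv (Dv y)
  have ht3 : AltOn w t2 (n+2) := by
    refine ⟨ht2.1, ht2.2.1, fun i hi => ?_⟩
    have hpa := hp _ (Ioo_subset_Icc_self (ht2.1 i (by omega)))
    have hpb := hp _ (Ioo_subset_Icc_self (ht2.1 (i+1) (by omega)))
    have halt := ht2.2.2 i hi
    show w (t2 i) * w (t2 (i+1)) < 0
    simp only [hwdef]
    nlinarith [mul_pos hpa hpb]
  -- Level 4 : alternating points of Dv w
  obtain ⟨u3, hu3⟩ := alt_step hw_d hw_c ht3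
  have base4 : AltOn (Dv w) u3 (n+1) := by
    have := alt_of_between ht3 hu3
    rwa [show n + 2 - 1 = n + 1 from rfl] at this
  -- Level 5 : alternating points of Dv (Dv w) = r * f between points of Dv w
  obtain ⟨u4, hu4⟩ := alt_step hw1_d hw1_c base4
  have hu4mem : ∀ i, i + 1 < n + 1 → u4 i ∈ Ioo (0:ℝ) 1 := fun i hi =>
    ⟨lt_trans (base4.1 i (by omega)).1 (hu4 i hi).1.1,
     lt_trans (hu4 i hi).1.2 (base4.1 (i+1) (by omega)).2⟩
  have hfsgn : ∀ i, i + 1 < n + 1 → 0 < r (u4 i) * f (u4 i) * Dv w (u3 (i+1)) := by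
    intro i hi
    have h1 := (hu4 i hi).2
    rwa [heq _ (Ioo_subset_Icc_self (hu4mem i hi))] at h1
  have hLmem : u3 n ∈ Ioo (0:ℝ) 1 := base4.1 n (by omega)
  have hLne : Dv w (u3 n) ≠ 0 := by
    intro hE
    have := base4.2.2 (n-1) (by omega)
    rw [show n - 1 + 1 = n from by omega, hE] at this; simp at this
  -- the extra point near 1
  have hkey : ∃ c ∈ Ioo (u3 n) 1, f c * Dv w (u3 n) < 0 := by
    by_cases hcase : Dv w 1 * Dv w (u3 n) ≤ 0
    · have hne : Dv w (u3 n) ≠ Dv w 1 := by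
        intro hE; rw [← hE] at hcase; nlinarith [mul_self_pos.mpr hLne]
      obtain ⟨c, hcmem, hc⟩ := mvt_sign hw1_d hw1_c (le_of_lt hLmem.1) le_rfl hLmem.2 hne
      have hcmem' : c ∈ Icc (0:ℝ) 1 :=
        Ioo_subset_Icc_self ⟨lt_trans hLmem.1 hcmem.1, hcmem.2⟩
      have h2 : (Dv w 1 - Dv w (u3 n)) * Dv w (u3 n) < 0 := by
        nlinarith [mul_self_pos.mpr hLne]
      have h3 : Dv (Dv w) c * Dv w (u3 n) < 0 := sign_aux2 hc h2
      rw [heq _ hcmem'] at h3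
      exact ⟨c, hcmem, sign_aux4 h3 (hr _ hcmem')⟩
    · push_neg at hcase
      have halpha_pos : 0 < alpha := by
        rcases halpha.lt_or_eq with h | h
        · exact h
        · exfalso
          rw [← h, zero_mul, add_zero] at hbc3
          rw [hbc3, zero_mul] at hcase
          exact lt_irrefl 0 hcase
      have hf1 : f 1 * Dv w (u3 n) < 0 := by
        have h5 : alpha * f 1 = -(Dv w 1) := by linarith
        have h6 : alpha * f 1 * Dv w (u3 n) < 0 := by
          rw [h5, neg_mul]; linarith
        nlinarith [h6, halpha_pos]
      have hf1ne : f 1 ≠ 0 := by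
        intro hE; rw [hE, zero_mul] at hf1; exact lt_irrefl 0 hf1
      have hU : {v : ℝ | 0 < v * f 1} ∈ 𝓝 (f 1) := by
        have hopen : IsOpen {v : ℝ | 0 < v * f 1} :=
          isOpen_lt continuous_const (continuous_id.mul continuous_const)
        exact hopen.mem_nhds (by simpa using mul_self_pos.mpr hf1ne)
      have hcont : Filter.Tendsto f (𝓝[Icc (0:ℝ) 1] 1) (𝓝 (f 1)) := hfc 1 (by norm_num)
      have hev : f ⁻¹' {v : ℝ | 0 < v * f 1} ∈ 𝓝[Icc (0:ℝ) 1] 1 := hcont hU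
      have hsub : Ioo (u3 n) 1 ⊆ Icc (0:ℝ) 1 := fun z hz =>
        ⟨le_of_lt (lt_trans hLmem.1 hz.1), le_of_lt hz.2⟩
      have hev' : f ⁻¹' {v : ℝ | 0 < v * f 1} ∈ 𝓝[Ioo (u3 n) 1] 1 :=
        nhdsWithin_mono 1 hsub hev
      have hne2 : (𝓝[Ioo (u3 n) 1] (1:ℝ)).NeBot := right_nhdsWithin_Ioo_neBot hLmem.2
      obtain ⟨c, hcp, hcI⟩ := Filter.nonempty_of_mem (Filter.inter_mem hev' self_mem_nhdsWithin)
      exact ⟨c, hcI, sign_aux2 hcp hf1⟩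
  obtain ⟨c, hcmem, hcsgn⟩ := hkey
  refine signChanges_of_altOn (s := fun i => if i = n then c else u4 i) ⟨?_, ?_, ?_⟩
  · intro i hi
    by_cases hiE : i = n
    · subst hiE; simp only [if_pos rfl]
      exact ⟨lt_trans hLmem.1 hcmem.1, hcmem.2⟩
    · simp only [if_neg hiE]
      exact hu4mem i (by omega)
  · intro i hi
    have hin : i ≠ n := by omega
    by_cases hiE : i + 1 = n
    · simp only [if_neg hin, if_pos hiE]
      have hlt := (hu4 i (by omega)).1.2
      rw [hiE] at hlt
      exact lt_trans hlt hcmem.1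
    · simp only [if_neg hin, if_neg hiE]
      exact lt_trans (hu4 i (by omega)).1.2 (hu4 (i+1) (by omega)).1.1
  · intro i hi
    have hin : i ≠ n := by omega
    by_cases hiE : i + 1 = n
    · simp only [if_neg hin, if_pos hiE]
      have h1 := hfsgn i (by omega)
      rw [hiE] at h1
      have h2 : 0 < f (u4 i) * Dv w (u3 n) :=
        sign_aux5 h1 (hr _ (Ioo_subset_Icc_self (hu4mem i (by omega))))
      exact sign_aux3 h2 hcsgn
    · simp only [if_neg hin, if_neg hiE]
      have h1 := hfsgn i (by omega)
      have h2 := hfsgn (i+1) (by omega)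
      have h3 := base4.2.2 (i+1) (by omega)
      have h4 : (r (u4 i) * f (u4 i)) * (r (u4 (i+1)) * f (u4 (i+1))) < 0 :=
        sign_mul_aux h1 h2 h3
      exact sign_aux6 h4 (hr _ (Ioo_subset_Icc_self (hu4mem i (by omega))))
        (hr _ (Ioo_subset_Icc_self (hu4mem (i+1) (by omega))))
end

section
/- Let p, r : [0,1] → ℝ be continuous with p(x) > 0 and r(x) > 0 for all x ∈ [0,1], and let c ∈ ℝ. If λ < 0 and y₁, y₂ are nontrivial classical solutions of (p·y'')'' − λ·(−y'' + c·r·y) = 0 both satisfying y(0) = y'(0) = y(1) = y'(1) = 0, then y₁ and y₂ are linearly dependent; i.e., every negative eigenvalue of this boundary-value problem has geometric multiplicity 1. -/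
open Set

/-- `y` is not identically zero on `[0,1]`. -/
def Nontriv (y : ℝ → ℝ) : Prop := ∃ x ∈ Set.Icc (0:ℝ) 1, y x ≠ 0

/-- `y` is a classical solution of `(p y'')'' - lam * (-y'' + c r y) = 0` on `[0,1]`. -/
def SolT (p r : ℝ → ℝ) (c lam : ℝ) (y : ℝ → ℝ) : Prop :=
  ContDiffOn ℝ 2 y (Set.Icc 0 1) ∧
  ContDiffOn ℝ 2 (fun x => p x * Dv (Dv y) x) (Set.Icc 0 1) ∧
  ∀ x ∈ Set.Icc (0:ℝ) 1,
    Dv (Dv (fun t => p t * Dv (Dv y) t)) x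
      - lam * (-(Dv (Dv y) x) + c * r x * y x) = 0

/-- Clamped boundary conditions `y(0) = y'(0) = y(1) = y'(1) = 0`. -/
def BC1 (y : ℝ → ℝ) : Prop := y 0 = 0 ∧ Dv y 0 = 0 ∧ y 1 = 0 ∧ Dv y 1 = 0

/-- Boundary conditions `y(0) = y'(0) = y'(1) = 0`, `(p y'')'(1) + lam * alpha * y(1) = 0`. -/
def BC2 (p : ℝ → ℝ) (lam alpha : ℝ) (y : ℝ → ℝ) : Prop :=
  y 0 = 0 ∧ Dv y 0 = 0 ∧ Dv y 1 = 0 ∧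
  Dv (fun t => p t * Dv (Dv y) t) 1 + lam * alpha * y 1 = 0

/-- Linear dependence of two functions on `[0,1]`. -/
def LinDep (y₁ y₂ : ℝ → ℝ) : Prop :=
  ∃ a b : ℝ, (a ≠ 0 ∨ b ≠ 0) ∧ ∀ x ∈ Set.Icc (0:ℝ) 1, a * y₁ x + b * y₂ x = 0

section Aux

local notation "II" => Set.Icc (0:ℝ) 1

lemma uDiff : UniqueDiffOn ℝ (Set.Icc (0:ℝ) 1) := uniqueDiffOn_Icc one_pos

lemma hda' {f : ℝ → ℝ} {d x : ℝ} (hx : x ∈ interior (Set.Icc (0:ℝ) 1))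
    (h : HasDerivWithinAt f d (Set.Icc (0:ℝ) 1) x) : HasDerivAt f d x := by
  rw [interior_Icc] at hx
  exact h.hasDerivAt (Icc_mem_nhds hx.1 hx.2)

lemma monoOn {f d : ℝ → ℝ} (h : ∀ x ∈ II, HasDerivWithinAt f (d x) II x)
    (hd : ∀ x ∈ II, 0 ≤ d x) : MonotoneOn f II := by
  apply monotoneOn_of_hasDerivWithinAt_nonneg (convex_Icc _ _)
    (fun x hx => (h x hx).continuousWithinAt)
    (f' := d)
  · intro x hx
    exact ((hda' hx (h x (interior_subset hx)))).hasDerivWithinAt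
  · intro x hx; exact hd x (interior_subset hx)

lemma strictMonoOn' {f d : ℝ → ℝ} (h : ∀ x ∈ II, HasDerivWithinAt f (d x) II x)
    (hd : ∀ x ∈ interior II, 0 < d x) : StrictMonoOn f II := by
  apply strictMonoOn_of_hasDerivWithinAt_pos (convex_Icc _ _)
    (fun x hx => (h x hx).continuousWithinAt)
    (f' := d)
  · intro x hx
    exact ((hda' hx (h x (interior_subset hx)))).hasDerivWithinAt
  · exact hd

lemma antiOn {f d : ℝ → ℝ} (h : ∀ x ∈ II, HasDerivWithinAt f (d x) II x)
    (hd : ∀ x ∈ II, d x ≤ 0) : AntitoneOn f II := by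
  apply antitoneOn_of_hasDerivWithinAt_nonpos (convex_Icc _ _)
    (fun x hx => (h x hx).continuousWithinAt)
    (f' := d)
  · intro x hx
    exact ((hda' hx (h x (interior_subset hx)))).hasDerivWithinAt
  · intro x hx; exact hd x (interior_subset hx)

lemma right_min_deriv_nonpos {f : ℝ → ℝ} {d τ : ℝ} (hτ : 0 < τ)
    (hf : HasDerivWithinAt f d (Set.Icc 0 τ) τ)
    (hmin : ∀ x ∈ Set.Icc (0:ℝ) τ, f τ ≤ f x) : d ≤ 0 := by
  have hne : (nhdsWithin τ (Set.Icc (0:ℝ) τ \ {τ})).NeBot := by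
    rw [Icc_sdiff_right, ← mem_closure_iff_nhdsWithin_neBot, closure_Ico hτ.ne]
    exact right_mem_Icc.2 hτ.le
  have hs := hasDerivWithinAt_iff_tendsto_slope.mp hf
  refine le_of_tendsto hs ?_
  filter_upwards [self_mem_nhdsWithin] with x hx
  obtain ⟨hx1, hx2⟩ := hx
  have hxτ : x < τ := lt_of_le_of_ne hx1.2 (by simpa using hx2)
  rw [slope_def_field]
  apply div_nonpos_of_nonneg_of_nonpos
  · have := hmin x hx1; linarith
  · linarith

lemma le_at_right {f : ℝ → ℝ} {τ b : ℝ} (hτ : 0 < τ)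
    (hf : ContinuousWithinAt f (Set.Icc 0 τ) τ)
    (hb : ∀ x ∈ Set.Ico (0:ℝ) τ, b ≤ f x) : b ≤ f τ := by
  have hne : (nhdsWithin τ (Set.Ico (0:ℝ) τ)).NeBot := by
    rw [← mem_closure_iff_nhdsWithin_neBot, closure_Ico hτ.ne]
    exact right_mem_Icc.2 hτ.le
  have ht : Filter.Tendsto f (nhdsWithin τ (Set.Ico (0:ℝ) τ)) (nhds (f τ)) :=
    hf.mono Ico_subset_Icc_self
  exact ge_of_tendsto ht (by filter_upwards [self_mem_nhdsWithin] with x hx using hb x hx)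

end Aux

section Sys

structure Sys (q s t U0 U1 W0 W1 : ℝ → ℝ) : Prop where
  hU0 : ∀ x ∈ Set.Icc (0:ℝ) 1, HasDerivWithinAt U0 (U1 x) (Set.Icc 0 1) x
  hU1 : ∀ x ∈ Set.Icc (0:ℝ) 1, HasDerivWithinAt U1 (q x * W0 x) (Set.Icc 0 1) x
  hW0 : ∀ x ∈ Set.Icc (0:ℝ) 1, HasDerivWithinAt W0 (W1 x) (Set.Icc 0 1) x
  hW1 : ∀ x ∈ Set.Icc (0:ℝ) 1, HasDerivWithinAt W1 (s x * U0 x + t x * W0 x) (Set.Icc 0 1) x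

variable {q s t U0 U1 W0 W1 V0 V1 X0 X1 : ℝ → ℝ}

lemma Sys.neg (h : Sys q s t U0 U1 W0 W1) :
    Sys q s t (fun x => -U0 x) (fun x => -U1 x) (fun x => -W0 x) (fun x => -W1 x) := by
  constructor <;> intro x hx
  · exact (h.hU0 x hx).neg
  · have := (h.hU1 x hx).neg
    convert this using 1 <;> first | rfl | ring
  · exact (h.hW0 x hx).neg
  · have := (h.hW1 x hx).neg
    convert this using 1 <;> first | rfl | ring

lemma Sys.comb (α β : ℝ) (h : Sys q s t U0 U1 W0 W1) (h' : Sys q s t V0 V1 X0 X1) :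
    Sys q s t (fun x => α * U0 x + β * V0 x) (fun x => α * U1 x + β * V1 x)
      (fun x => α * W0 x + β * X0 x) (fun x => α * W1 x + β * X1 x) := by
  constructor <;> intro x hx
  · exact ((h.hU0 x hx).const_mul α).add ((h'.hU0 x hx).const_mul β)
  · have := ((h.hU1 x hx).const_mul α).add ((h'.hU1 x hx).const_mul β)
    convert this using 1 <;> first | rfl | ring
  · exact ((h.hW0 x hx).const_mul α).add ((h'.hW0 x hx).const_mul β)
  · have := ((h.hW1 x hx).const_mul α).add ((h'.hW1 x hx).const_mul β)
    convert this using 1 <;> first | rfl | ring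

lemma Sys.contU0 (h : Sys q s t U0 U1 W0 W1) : ContinuousOn U0 (Set.Icc (0:ℝ) 1) :=
  fun x hx => (h.hU0 x hx).continuousWithinAt
lemma Sys.contU1 (h : Sys q s t U0 U1 W0 W1) : ContinuousOn U1 (Set.Icc (0:ℝ) 1) :=
  fun x hx => (h.hU1 x hx).continuousWithinAt
lemma Sys.contW0 (h : Sys q s t U0 U1 W0 W1) : ContinuousOn W0 (Set.Icc (0:ℝ) 1) :=
  fun x hx => (h.hW0 x hx).continuousWithinAt
lemma Sys.contW1 (h : Sys q s t U0 U1 W0 W1) : ContinuousOn W1 (Set.Icc (0:ℝ) 1) :=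
  fun x hx => (h.hW1 x hx).continuousWithinAt

/-- A common bound on `|q|, |s|, |t|` over `[0,1]`, at least 1. -/
lemma bound_qst (cq : ContinuousOn q (Set.Icc (0:ℝ) 1)) (cs : ContinuousOn s (Set.Icc (0:ℝ) 1))
    (ct : ContinuousOn t (Set.Icc (0:ℝ) 1)) :
    ∃ C : ℝ, 1 ≤ C ∧ ∀ x ∈ Set.Icc (0:ℝ) 1, |q x| ≤ C ∧ |s x| ≤ C ∧ |t x| ≤ C := by
  obtain ⟨Cq, hCq⟩ := isCompact_Icc.exists_bound_of_continuousOn cq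
  obtain ⟨Cs, hCs⟩ := isCompact_Icc.exists_bound_of_continuousOn cs
  obtain ⟨Ct, hCt⟩ := isCompact_Icc.exists_bound_of_continuousOn ct
  refine ⟨max 1 (max Cq (max Cs Ct)), le_max_left _ _, fun x hx => ⟨?_, ?_, ?_⟩⟩
  · have := hCq x hx; rw [Real.norm_eq_abs] at this
    exact this.trans ((le_max_left _ _).trans (le_max_right _ _))
  · have := hCs x hx; rw [Real.norm_eq_abs] at this
    exact this.trans (((le_max_left _ _).trans (le_max_right _ _)).trans (le_max_right _ _))
  · have := hCt x hx; rw [Real.norm_eq_abs] at this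
    exact this.trans (((le_max_right _ _).trans (le_max_right _ _)).trans (le_max_right _ _))

end Sys

section NonNeg

lemma contOn_min {f g : ℝ → ℝ} {s : Set ℝ} (hf : ContinuousOn f s) (hg : ContinuousOn g s) :
    ContinuousOn (fun x => min (f x) (g x)) s := by
  have heq : (fun x => min (f x) (g x)) = fun x => (f x + g x - |f x - g x|) / 2 := by
    funext x
    rcases le_total (f x) (g x) with h | h
    · rw [min_eq_left h, abs_of_nonpos (by linarith)]; ring
    · rw [min_eq_right h, abs_of_nonneg (by linarith)]; ring
  rw [heq]
  exact ((hf.add hg).sub (hf.sub hg).abs).div_const 2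

variable {q s t U0 U1 W0 W1 : ℝ → ℝ}

set_option maxHeartbeats 1600000 in
lemma Sys.nonneg (h : Sys q s t U0 U1 W0 W1)
    (cq : ContinuousOn q (Set.Icc (0:ℝ) 1)) (cs : ContinuousOn s (Set.Icc (0:ℝ) 1))
    (ct : ContinuousOn t (Set.Icc (0:ℝ) 1))
    (hq : ∀ x ∈ Set.Icc (0:ℝ) 1, 0 ≤ q x) (hs : ∀ x ∈ Set.Icc (0:ℝ) 1, 0 ≤ s x)
    (ht : ∀ x ∈ Set.Icc (0:ℝ) 1, 0 ≤ t x)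
    (h00 : U0 0 = 0) (h10 : U1 0 = 0) (hw00 : 0 ≤ W0 0) (hw10 : 0 ≤ W1 0) :
    ∀ x ∈ Set.Icc (0:ℝ) 1, 0 ≤ U0 x ∧ 0 ≤ U1 x ∧ 0 ≤ W0 x ∧ 0 ≤ W1 x := by
  obtain ⟨C, hC1, hCb⟩ := bound_qst cq cs ct
  obtain ⟨K, hK⟩ : ∃ K : ℝ, K = 2 * C + 1 := ⟨_, rfl⟩
  have hK0 : 0 ≤ K := by rw [hK]; linarith
  obtain ⟨g, hg⟩ : ∃ g : ℝ → ℝ, g = fun x => min (min (U0 x) (U1 x)) (min (W0 x) (W1 x)) :=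
    ⟨_, rfl⟩
  have hg0 : 0 ≤ g 0 := by
    rw [hg]; exact le_min (le_min h00.ge h10.ge) (le_min hw00 hw10)
  have hgle : ∀ x, g x ≤ U0 x ∧ g x ≤ U1 x ∧ g x ≤ W0 x ∧ g x ≤ W1 x := by
    intro x
    rw [hg]
    exact ⟨(min_le_left _ _).trans (min_le_left _ _),
      (min_le_left _ _).trans (min_le_right _ _),
      (min_le_right _ _).trans (min_le_left _ _),
      (min_le_right _ _).trans (min_le_right _ _)⟩
  have cg : ContinuousOn g (Set.Icc (0:ℝ) 1) := by
    rw [hg]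
    exact contOn_min (contOn_min h.contU0 h.contU1) (contOn_min h.contW0 h.contW1)
  have key : ∀ ε > (0:ℝ), ∀ x ∈ Set.Icc (0:ℝ) 1, 0 ≤ g x + ε * Real.exp (K * x) := by
    intro ε hε
    by_contra hcon
    push_neg at hcon
    obtain ⟨x0, hx0I, hx0⟩ := hcon
    obtain ⟨φ, hφ⟩ : ∃ φ : ℝ → ℝ, φ = fun x => g x + ε * Real.exp (K * x) := ⟨_, rfl⟩
    have hφval : ∀ x, φ x = g x + ε * Real.exp (K * x) := fun x => by rw [hφ]
    have cφ : ContinuousOn φ (Set.Icc (0:ℝ) 1) := by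
      rw [hφ]
      exact cg.add (continuous_const.mul (Real.continuous_exp.comp
        (continuous_const.mul continuous_id))).continuousOn
    have hClosed : IsClosed (Set.Icc (0:ℝ) 1 ∩ φ ⁻¹' (Set.Iic 0)) :=
      cφ.preimage_isClosed_of_isClosed isClosed_Icc isClosed_Iic
    obtain ⟨Bad, hBad⟩ : ∃ B : Set ℝ, B = {x | x ∈ Set.Icc (0:ℝ) 1 ∧ φ x < 0} := ⟨_, rfl⟩
    have hBadmem : ∀ x, x ∈ Bad ↔ (x ∈ Set.Icc (0:ℝ) 1 ∧ φ x < 0) := fun x => by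
      rw [hBad]; rfl
    have hBadCl : Bad ⊆ Set.Icc (0:ℝ) 1 ∩ φ ⁻¹' (Set.Iic 0) := by
      intro x hx
      rw [hBadmem] at hx
      exact ⟨hx.1, le_of_lt hx.2⟩
    have hBadne : Bad.Nonempty := ⟨x0, (hBadmem x0).2 ⟨hx0I, by rw [hφval]; linarith⟩⟩
    have hbdd : BddBelow Bad := ⟨0, fun x hx => ((hBadmem x).1 hx).1.1⟩
    obtain ⟨τ, hτdef⟩ : ∃ τ : ℝ, τ = sInf Bad := ⟨_, rfl⟩
    have hτCl : τ ∈ Set.Icc (0:ℝ) 1 ∩ φ ⁻¹' (Set.Iic 0) := by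
      rw [hτdef]
      exact hClosed.closure_subset_iff.mpr hBadCl (csInf_mem_closure hBadne hbdd)
    have hτI : τ ∈ Set.Icc (0:ℝ) 1 := hτCl.1
    have hφτ : φ τ ≤ 0 := hτCl.2
    have hτpos : 0 < τ := by
      rcases eq_or_lt_of_le hτI.1 with he | hl
      · exfalso
        have h1 : φ 0 = g 0 + ε := by rw [hφval]; simp
        rw [← he, h1] at hφτ
        linarith
      · exact hl
    have hτ1 : τ ≤ 1 := hτI.2
    have hIco : ∀ x ∈ Set.Ico (0:ℝ) τ, 0 ≤ φ x := by
      intro x hx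
      by_contra hneg
      push_neg at hneg
      have hxI : x ∈ Set.Icc (0:ℝ) 1 := ⟨hx.1, hx.2.le.trans hτ1⟩
      have hxB : x ∈ Bad := (hBadmem x).2 ⟨hxI, hneg⟩
      have : τ ≤ x := by rw [hτdef]; exact csInf_le hbdd hxB
      linarith [hx.2]
    have hlow : ∀ x ∈ Set.Ico (0:ℝ) τ, -(ε * Real.exp (K * τ)) ≤ g x := by
      intro x hx
      have h1 := hIco x hx
      rw [hφval] at h1
      have h2 : Real.exp (K * x) ≤ Real.exp (K * τ) :=
        Real.exp_le_exp.2 (mul_le_mul_of_nonneg_left hx.2.le hK0)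
      nlinarith
    have hτbd : ∀ (z : ℝ → ℝ), ContinuousOn z (Set.Icc (0:ℝ) 1) →
        (∀ x, g x ≤ z x) → -(ε * Real.exp (K * τ)) ≤ z τ := by
      intro z cz hz
      refine le_at_right hτpos ((cz τ hτI).mono (Icc_subset_Icc_right hτ1)) ?_
      intro x hx
      exact (hlow x hx).trans (hz x)
    have hU0τ := hτbd U0 h.contU0 (fun x => (hgle x).1)
    have hU1τ := hτbd U1 h.contU1 (fun x => (hgle x).2.1)
    have hW0τ := hτbd W0 h.contW0 (fun x => (hgle x).2.2.1)
    have hW1τ := hτbd W1 h.contW1 (fun x => (hgle x).2.2.2)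
    have hexpτ : 0 < Real.exp (K * τ) := Real.exp_pos _
    have hE : 0 < ε * Real.exp (K * τ) := by positivity
    have main : ∀ (z dz : ℝ → ℝ), (∀ x ∈ Set.Icc (0:ℝ) 1,
          HasDerivWithinAt z (dz x) (Set.Icc 0 1) x) →
        (∀ x, g x ≤ z x) →
        z τ + ε * Real.exp (K * τ) ≤ 0 →
        dz τ + ε * Real.exp (K * τ) * K ≤ 0 := by
      intro z dz hz hgz hzτ
      have hEd : HasDerivAt (fun y : ℝ => ε * Real.exp (K * y)) (ε * Real.exp (K * τ) * K) τ := by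
        have h1 : HasDerivAt (fun y : ℝ => K * y) K τ := by
          simpa using (hasDerivAt_id τ).const_mul K
        have h2 := (h1.exp.const_mul ε)
        convert h2 using 1
        all_goals first | rfl | ring
      have hh : HasDerivWithinAt (fun x => z x + ε * Real.exp (K * x))
          (dz τ + ε * Real.exp (K * τ) * K) (Set.Icc 0 τ) τ :=
        ((hz τ hτI).mono (Icc_subset_Icc_right hτ1)).add hEd.hasDerivWithinAt
      refine right_min_deriv_nonpos hτpos hh ?_
      intro x hx
      rcases eq_or_lt_of_le hx.2 with he | hlt
      · rw [he]
      · have h1 := hIco x ⟨hx.1, hlt⟩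
        rw [hφval] at h1
        have h2 := hgz x
        linarith
    have hgτ : g τ ≤ -(ε * Real.exp (K * τ)) := by
      rw [hφval] at hφτ; linarith
    rw [hg] at hgτ
    obtain ⟨hqC, hsC, htC⟩ := hCb τ hτI
    have hq0 := hq τ hτI
    have hs0 := hs τ hτI
    have ht0 := ht τ hτI
    rw [abs_le] at hqC hsC htC
    have hCE : 0 < C * (ε * Real.exp (K * τ)) := by nlinarith
    have h4 : ε * Real.exp (K * τ) * K = ε * Real.exp (K * τ) * (2 * C + 1) := by rw [hK]
    rcases min_le_iff.mp hgτ with h1 | h1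
    · rcases min_le_iff.mp h1 with h2 | h2
      · have h3 : U1 τ + ε * Real.exp (K * τ) * K ≤ 0 :=
          main U0 U1 h.hU0 (fun x => (hgle x).1) (by linarith)
        rw [h4] at h3
        nlinarith
      · have h3 : q τ * W0 τ + ε * Real.exp (K * τ) * K ≤ 0 :=
          main U1 (fun x => q x * W0 x) h.hU1 (fun x => (hgle x).2.1) (by linarith)
        rw [h4] at h3
        nlinarith [mul_nonneg hq0 (by linarith : (0:ℝ) ≤ W0 τ + ε * Real.exp (K * τ)),
          mul_le_mul_of_nonneg_right hqC.2 hE.le]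
    · rcases min_le_iff.mp h1 with h2 | h2
      · have h3 : W1 τ + ε * Real.exp (K * τ) * K ≤ 0 :=
          main W0 W1 h.hW0 (fun x => (hgle x).2.2.1) (by linarith)
        rw [h4] at h3
        nlinarith
      · have h3 : s τ * U0 τ + t τ * W0 τ + ε * Real.exp (K * τ) * K ≤ 0 :=
          main W1 (fun x => s x * U0 x + t x * W0 x) h.hW1 (fun x => (hgle x).2.2.2)
            (by linarith)
        rw [h4] at h3
        nlinarith [mul_nonneg hs0 (by linarith : (0:ℝ) ≤ U0 τ + ε * Real.exp (K * τ)),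
          mul_le_mul_of_nonneg_right hsC.2 hE.le,
          mul_nonneg ht0 (by linarith : (0:ℝ) ≤ W0 τ + ε * Real.exp (K * τ)),
          mul_le_mul_of_nonneg_right htC.2 hE.le]
  have hgnn : ∀ x ∈ Set.Icc (0:ℝ) 1, 0 ≤ g x := by
    intro x hx
    by_contra hneg
    push_neg at hneg
    have hexp : 0 < Real.exp (K * x) := Real.exp_pos _
    have hεpos : 0 < -g x / (2 * Real.exp (K * x)) :=
      div_pos (by linarith) (by positivity)
    have h1 := key _ hεpos x hx
    have h2 : -g x / (2 * Real.exp (K * x)) * Real.exp (K * x) = -g x / 2 := by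
      field_simp
    rw [h2] at h1
    linarith
  intro x hx
  have h1 := hgnn x hx
  obtain ⟨e1, e2, e3, e4⟩ := hgle x
  exact ⟨h1.trans e1, h1.trans e2, h1.trans e3, h1.trans e4⟩

end NonNeg

section PosVanish

variable {q s t U0 U1 W0 W1 : ℝ → ℝ}

set_option maxHeartbeats 800000 in
lemma Sys.pos (h : Sys q s t U0 U1 W0 W1)
    (cq : ContinuousOn q (Set.Icc (0:ℝ) 1)) (cs : ContinuousOn s (Set.Icc (0:ℝ) 1))
    (ct : ContinuousOn t (Set.Icc (0:ℝ) 1))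
    (hq : ∀ x ∈ Set.Icc (0:ℝ) 1, 0 < q x) (hs : ∀ x ∈ Set.Icc (0:ℝ) 1, 0 ≤ s x)
    (ht : ∀ x ∈ Set.Icc (0:ℝ) 1, 0 < t x)
    (h00 : U0 0 = 0) (h10 : U1 0 = 0) (hw00 : 0 ≤ W0 0) (hw10 : 0 ≤ W1 0)
    (hsum : 0 < W0 0 + W1 0) : 0 < U0 1 := by
  have hnn := h.nonneg cq cs ct (fun x hx => (hq x hx).le) hs (fun x hx => (ht x hx).le)
    h00 h10 hw00 hw10
  have mem0 : (0:ℝ) ∈ Set.Icc (0:ℝ) 1 := by norm_num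
  have mem1 : (1:ℝ) ∈ Set.Icc (0:ℝ) 1 := by norm_num
  -- W0 and W1 are monotone
  have mW1 : MonotoneOn W1 (Set.Icc (0:ℝ) 1) := by
    refine monoOn h.hW1 (fun x hx => ?_)
    have := hnn x hx
    have := hs x hx
    have := (ht x hx).le
    nlinarith [this]
  have mW0 : MonotoneOn W0 (Set.Icc (0:ℝ) 1) :=
    monoOn h.hW0 (fun x hx => (hnn x hx).2.2.2)
  -- W0 is positive on (0,1]
  have hW0pos : ∀ x ∈ Set.Ioc (0:ℝ) 1, 0 < W0 x := by
    rcases lt_or_ge 0 (W0 0) with hc | hc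
    · intro x hx
      have := mW0 mem0 ⟨hx.1.le, hx.2⟩ hx.1.le
      linarith
    · have hW10 : 0 < W1 0 := by linarith
      have sW0 : StrictMonoOn W0 (Set.Icc (0:ℝ) 1) := by
        refine strictMonoOn' h.hW0 (fun x hx => ?_)
        rw [interior_Icc] at hx
        have := mW1 mem0 ⟨hx.1.le, hx.2.le⟩ hx.1.le
        linarith
      intro x hx
      have := sW0 mem0 ⟨hx.1.le, hx.2⟩ hx.1
      linarith
  -- U1 is positive on (0,1]
  have sU1 : StrictMonoOn U1 (Set.Icc (0:ℝ) 1) := by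
    refine strictMonoOn' h.hU1 (fun x hx => ?_)
    rw [interior_Icc] at hx
    have h1 := hW0pos x ⟨hx.1, hx.2.le⟩
    have h2 := hq x ⟨hx.1.le, hx.2.le⟩
    exact mul_pos h2 h1
  have sU0 : StrictMonoOn U0 (Set.Icc (0:ℝ) 1) := by
    refine strictMonoOn' h.hU0 (fun x hx => ?_)
    rw [interior_Icc] at hx
    have := sU1 mem0 ⟨hx.1.le, hx.2.le⟩ hx.1
    linarith [h10]
  have := sU0 mem0 mem1 one_pos
  linarith [h00]

set_option maxHeartbeats 800000 in
lemma Sys.gronwall (h : Sys q s t U0 U1 W0 W1)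
    (cq : ContinuousOn q (Set.Icc (0:ℝ) 1)) (cs : ContinuousOn s (Set.Icc (0:ℝ) 1))
    (ct : ContinuousOn t (Set.Icc (0:ℝ) 1))
    (h00 : U0 0 = 0) (h10 : U1 0 = 0) (hw00 : W0 0 = 0) (hw10 : W1 0 = 0) :
    ∀ x ∈ Set.Icc (0:ℝ) 1, U0 x = 0 := by
  obtain ⟨C, hC1, hCb⟩ := bound_qst cq cs ct
  obtain ⟨K, hK⟩ : ∃ K : ℝ, K = 5 * C := ⟨_, rfl⟩
  obtain ⟨g, hgdef⟩ : ∃ g : ℝ → ℝ,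
      g = fun x => U0 x * U0 x + U1 x * U1 x + W0 x * W0 x + W1 x * W1 x := ⟨_, rfl⟩
  have hgval : ∀ x, g x = U0 x * U0 x + U1 x * U1 x + W0 x * W0 x + W1 x * W1 x :=
    fun x => by rw [hgdef]
  obtain ⟨gd, hgddef⟩ : ∃ gd : ℝ → ℝ, gd = fun x =>
      (U1 x * U0 x + U0 x * U1 x) + (q x * W0 x * U1 x + U1 x * (q x * W0 x)) +
      (W1 x * W0 x + W0 x * W1 x) +
      ((s x * U0 x + t x * W0 x) * W1 x + W1 x * (s x * U0 x + t x * W0 x)) := ⟨_, rfl⟩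
  have hg : ∀ x ∈ Set.Icc (0:ℝ) 1, HasDerivWithinAt g (gd x) (Set.Icc 0 1) x := by
    intro x hx
    rw [hgdef, hgddef]
    exact ((((h.hU0 x hx).mul (h.hU0 x hx)).add ((h.hU1 x hx).mul (h.hU1 x hx))).add
      ((h.hW0 x hx).mul (h.hW0 x hx))).add ((h.hW1 x hx).mul (h.hW1 x hx))
  have hgnn : ∀ x, 0 ≤ g x := by
    intro x
    rw [hgval]
    nlinarith [mul_self_nonneg (U0 x), mul_self_nonneg (U1 x), mul_self_nonneg (W0 x),
      mul_self_nonneg (W1 x)]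
  have hbound : ∀ x ∈ Set.Icc (0:ℝ) 1, gd x ≤ K * g x := by
    intro x hx
    obtain ⟨hqC, hsC, htC⟩ := hCb x hx
    rw [abs_le] at hqC hsC htC
    rw [hK, hgval]
    simp only [hgddef]
    nlinarith [mul_nonneg (by linarith : (0:ℝ) ≤ C - q x) (mul_self_nonneg (U1 x + W0 x)),
      mul_nonneg (by linarith : (0:ℝ) ≤ C + q x) (mul_self_nonneg (U1 x - W0 x)),
      mul_nonneg (by linarith : (0:ℝ) ≤ C - s x) (mul_self_nonneg (U0 x + W1 x)),
      mul_nonneg (by linarith : (0:ℝ) ≤ C + s x) (mul_self_nonneg (U0 x - W1 x)),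
      mul_nonneg (by linarith : (0:ℝ) ≤ C - t x) (mul_self_nonneg (W0 x + W1 x)),
      mul_nonneg (by linarith : (0:ℝ) ≤ C + t x) (mul_self_nonneg (W0 x - W1 x)),
      mul_self_nonneg (U0 x - U1 x), mul_self_nonneg (W0 x - W1 x),
      mul_self_nonneg (U0 x + U1 x), mul_self_nonneg (U1 x),
      mul_self_nonneg (U0 x), mul_self_nonneg (W0 x), mul_self_nonneg (W1 x)]
  -- the function g x * exp (-K x) is antitone
  have hanti : AntitoneOn (fun x => g x * Real.exp (-K * x)) (Set.Icc (0:ℝ) 1) := by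
    refine antiOn (d := fun x => gd x * Real.exp (-K * x) + g x * (Real.exp (-K * x) * -K))
      (fun x hx => ?_) (fun x hx => ?_)
    · have hEd : HasDerivAt (fun y : ℝ => Real.exp (-K * y)) (Real.exp (-K * x) * -K) x := by
        have h1 : HasDerivAt (fun y : ℝ => -K * y) (-K) x := by
          simpa using (hasDerivAt_id x).const_mul (-K)
        exact h1.exp
      exact (hg x hx).mul hEd.hasDerivWithinAt
    · have h1 := hbound x hx
      have h2 : 0 < Real.exp (-K * x) := Real.exp_pos _
      have h3 := hgnn x
      show gd x * Real.exp (-K * x) + g x * (Real.exp (-K * x) * -K) ≤ 0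
      nlinarith
  have hg00 : g 0 = 0 := by rw [hgval, h00, h10, hw00, hw10]; ring
  intro x hx
  have h1 : (fun x => g x * Real.exp (-K * x)) x ≤ (fun x => g x * Real.exp (-K * x)) 0 :=
    hanti (by norm_num) hx hx.1
  simp only [mul_zero, Real.exp_zero] at h1
  rw [hg00] at h1
  have h2 : 0 < Real.exp (-K * x) := Real.exp_pos _
  have h3 : g x ≤ 0 := by nlinarith
  have h4 : g x = 0 := le_antisymm h3 (hgnn x)
  rw [hgval] at h4
  have h5 : U0 x * U0 x = 0 := by
    nlinarith [mul_self_nonneg (U0 x), mul_self_nonneg (U1 x), mul_self_nonneg (W0 x),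
      mul_self_nonneg (W1 x)]
  exact mul_self_eq_zero.mp h5

lemma Sys.vanish (h : Sys q s t U0 U1 W0 W1)
    (cq : ContinuousOn q (Set.Icc (0:ℝ) 1)) (cs : ContinuousOn s (Set.Icc (0:ℝ) 1))
    (ct : ContinuousOn t (Set.Icc (0:ℝ) 1))
    (hq : ∀ x ∈ Set.Icc (0:ℝ) 1, 0 < q x) (hs : ∀ x ∈ Set.Icc (0:ℝ) 1, 0 ≤ s x)
    (ht : ∀ x ∈ Set.Icc (0:ℝ) 1, 0 < t x)
    (h00 : U0 0 = 0) (h10 : U1 0 = 0) (hw00 : W0 0 = 0) (hU01 : U0 1 = 0) :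
    ∀ x ∈ Set.Icc (0:ℝ) 1, U0 x = 0 := by
  rcases lt_trichotomy (W1 0) 0 with hc | hc | hc
  · exfalso
    have hpos := (h.neg).pos cq cs ct hq hs ht (by simp [h00]) (by simp [h10])
      (by simp [hw00]) (by simp; linarith) (by simp [hw00]; linarith)
    simp only [hU01] at hpos
    norm_num at hpos
  · exact h.gronwall cq cs ct h00 h10 hw00 hc
  · exfalso
    have hpos := h.pos cq cs ct hq hs ht h00 h10 hw00.ge hc.le (by rw [hw00]; linarith)
    rw [hU01] at hpos
    norm_num at hpos

end PosVanish

section Extract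

variable {p r : ℝ → ℝ} {c lam : ℝ} {y : ℝ → ℝ}

/-- Basic derivative facts extracted from a solution. -/
lemma sol_derivs (hy : SolT p r c lam y) :
    (∀ x ∈ Set.Icc (0:ℝ) 1, HasDerivWithinAt y (Dv y x) (Set.Icc 0 1) x) ∧
    (∀ x ∈ Set.Icc (0:ℝ) 1, HasDerivWithinAt (Dv y) (Dv (Dv y) x) (Set.Icc 0 1) x) ∧
    (∀ x ∈ Set.Icc (0:ℝ) 1, HasDerivWithinAt (fun x => p x * Dv (Dv y) x)
      (Dv (fun x => p x * Dv (Dv y) x) x) (Set.Icc 0 1) x) ∧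
    (∀ x ∈ Set.Icc (0:ℝ) 1, HasDerivWithinAt (Dv (fun x => p x * Dv (Dv y) x))
      (Dv (Dv (fun x => p x * Dv (Dv y) x)) x) (Set.Icc 0 1) x) := by
  obtain ⟨h2, hw2, _⟩ := hy
  have hd1 : DifferentiableOn ℝ y (Set.Icc (0:ℝ) 1) :=
    h2.differentiableOn (by norm_num)
  have hc1 : ContDiffOn ℝ 1 (Dv y) (Set.Icc (0:ℝ) 1) :=
    h2.derivWithin uDiff (by norm_num)
  have hd2 : DifferentiableOn ℝ (Dv y) (Set.Icc (0:ℝ) 1) :=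
    hc1.differentiableOn (by norm_num)
  have hwd1 : DifferentiableOn ℝ (fun x => p x * Dv (Dv y) x) (Set.Icc (0:ℝ) 1) :=
    hw2.differentiableOn (by norm_num)
  have hwc1 : ContDiffOn ℝ 1 (Dv (fun x => p x * Dv (Dv y) x)) (Set.Icc (0:ℝ) 1) :=
    hw2.derivWithin uDiff (by norm_num)
  have hwd2 : DifferentiableOn ℝ (Dv (fun x => p x * Dv (Dv y) x)) (Set.Icc (0:ℝ) 1) :=
    hwc1.differentiableOn (by norm_num)
  exact ⟨fun x hx => (hd1 x hx).hasDerivWithinAt, fun x hx => (hd2 x hx).hasDerivWithinAt,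
    fun x hx => (hwd1 x hx).hasDerivWithinAt, fun x hx => (hwd2 x hx).hasDerivWithinAt⟩

lemma sol_sys (hp : ∀ x ∈ Set.Icc (0:ℝ) 1, 0 < p x) (hy : SolT p r c lam y) :
    Sys (fun x => (p x)⁻¹) (fun x => lam * c * r x) (fun x => -lam * (p x)⁻¹)
      y (Dv y) (fun x => p x * Dv (Dv y) x) (Dv (fun x => p x * Dv (Dv y) x)) := by
  obtain ⟨hd1, hd2, hd3, hd4⟩ := sol_derivs hy
  have heq := hy.2.2
  constructor
  · exact hd1
  · intro x hx
    have hne : p x ≠ 0 := (hp x hx).ne'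
    have h1 := hd2 x hx
    have h2 : (p x)⁻¹ * (p x * Dv (Dv y) x) = Dv (Dv y) x := by
      field_simp
    rw [h2]
    exact h1
  · exact hd3
  · intro x hx
    have hne : p x ≠ 0 := (hp x hx).ne'
    have h1 := hd4 x hx
    have h2 : Dv (Dv (fun x => p x * Dv (Dv y) x)) x
        = lam * (-(Dv (Dv y) x) + c * r x * y x) := by
      have := heq x hx
      linarith
    have h3 : lam * c * r x * y x + -lam * (p x)⁻¹ * (p x * Dv (Dv y) x)
        = lam * (-(Dv (Dv y) x) + c * r x * y x) := by
      field_simp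
      ring
    rw [h3, ← h2]
    exact h1

end Extract

section CNonneg

variable {p r : ℝ → ℝ} {c lam : ℝ} {y : ℝ → ℝ}

set_option maxHeartbeats 800000 in
lemma no_sol_c_nonneg (hp : ∀ x ∈ Set.Icc (0:ℝ) 1, 0 < p x)
    (hr : ∀ x ∈ Set.Icc (0:ℝ) 1, 0 < r x) (hc : 0 ≤ c) (hlam : lam < 0)
    (hy : SolT p r c lam y) (hnt : Nontriv y) (hbc : BC1 y) : False := by
  obtain ⟨hd1, hd2, hd3, hd4⟩ := sol_derivs hy
  have heq := hy.2.2
  obtain ⟨hb0, hb1, hb2, hb3⟩ := hbc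
  obtain ⟨F, hFdef⟩ : ∃ F : ℝ → ℝ, F = fun x =>
      Dv (fun x => p x * Dv (Dv y) x) x * y x - (p x * Dv (Dv y) x) * Dv y x
        + lam * (y x * Dv y x) := ⟨_, rfl⟩
  obtain ⟨Fd, hFddef⟩ : ∃ Fd : ℝ → ℝ, Fd = fun x =>
      (Dv (Dv (fun x => p x * Dv (Dv y) x)) x * y x
        + Dv (fun x => p x * Dv (Dv y) x) x * Dv y x)
      - (Dv (fun x => p x * Dv (Dv y) x) x * Dv y x
        + (p x * Dv (Dv y) x) * Dv (Dv y) x)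
      + lam * (Dv y x * Dv y x + y x * Dv (Dv y) x) := ⟨_, rfl⟩
  have hF : ∀ x ∈ Set.Icc (0:ℝ) 1, HasDerivWithinAt F (Fd x) (Set.Icc 0 1) x := by
    intro x hx
    rw [hFdef, hFddef]
    exact (((hd4 x hx).mul (hd1 x hx)).sub ((hd3 x hx).mul (hd2 x hx))).add
      (((hd1 x hx).mul (hd2 x hx)).const_mul lam)
  have hFd_eq : ∀ x ∈ Set.Icc (0:ℝ) 1, Fd x =
      lam * c * r x * (y x * y x) - p x * (Dv (Dv y) x * Dv (Dv y) x)
        + lam * (Dv y x * Dv y x) := by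
    intro x hx
    have h2 : Dv (Dv (fun x => p x * Dv (Dv y) x)) x
        = lam * (-(Dv (Dv y) x) + c * r x * y x) := by
      have := heq x hx
      linarith
    rw [hFddef]
    simp only []
    rw [h2]
    ring
  have hFd_nonpos : ∀ x ∈ Set.Icc (0:ℝ) 1, Fd x ≤ 0 := by
    intro x hx
    rw [hFd_eq x hx]
    have h1 := hp x hx
    have h2 := hr x hx
    nlinarith [mul_nonneg (mul_nonneg (mul_nonneg (neg_nonneg.2 hlam.le) hc) (h2.le)) (mul_self_nonneg (y x)),
      mul_nonneg (h1.le) (mul_self_nonneg (Dv (Dv y) x)),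
      mul_nonneg (neg_nonneg.2 hlam.le) (mul_self_nonneg (Dv y x))]
  have hanti : AntitoneOn F (Set.Icc (0:ℝ) 1) := antiOn hF hFd_nonpos
  have hF0 : F 0 = 0 := by rw [hFdef]; simp [hb0, hb1]
  have hF1 : F 1 = 0 := by rw [hFdef]; simp [hb2, hb3]
  have hFzero : ∀ x ∈ Set.Icc (0:ℝ) 1, F x = 0 := by
    intro x hx
    have h1 : F x ≤ F 0 := hanti (by norm_num) hx hx.1
    have h2 : F 1 ≤ F x := hanti hx (by norm_num) hx.2
    rw [hF0] at h1
    rw [hF1] at h2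
    linarith
  have hFd_zero : ∀ x ∈ Set.Icc (0:ℝ) 1, Fd x = 0 := by
    intro x hx
    have h1 : derivWithin F (Set.Icc (0:ℝ) 1) x = Fd x :=
      (hF x hx).derivWithin (uDiff x hx)
    have h2 : derivWithin F (Set.Icc (0:ℝ) 1) x = 0 := by
      have h3 : derivWithin F (Set.Icc (0:ℝ) 1) x
          = derivWithin (fun _ => (0:ℝ)) (Set.Icc (0:ℝ) 1) x :=
        derivWithin_congr hFzero (hFzero x hx)
      rw [h3, derivWithin_fun_const]; rfl
    rw [← h1, h2]
  -- deduce that Dv y vanishes identically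
  have hu1_zero : ∀ x ∈ Set.Icc (0:ℝ) 1, Dv y x = 0 := by
    intro x hx
    have h1 := hFd_zero x hx
    rw [hFd_eq x hx] at h1
    have h2 := hp x hx
    have h3 := hr x hx
    have h4 : Dv y x * Dv y x ≤ 0 := by
      nlinarith [mul_nonneg (mul_nonneg (mul_nonneg (neg_nonneg.2 hlam.le) hc) h3.le) (mul_self_nonneg (y x)),
        mul_nonneg h2.le (mul_self_nonneg (Dv (Dv y) x)),
        mul_nonneg (neg_nonneg.2 hlam.le) (mul_self_nonneg (Dv y x))]
    exact mul_self_eq_zero.mp (le_antisymm h4 (mul_self_nonneg _))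
  have hconst : ∀ x ∈ Set.Icc (0:ℝ) 1, y x = y 0 := by
    apply constant_of_derivWithin_zero (hy.1.differentiableOn (by norm_num))
    intro x hx
    exact hu1_zero x (Set.Ico_subset_Icc_self hx)
  obtain ⟨x, hxI, hxne⟩ := hnt
  exact hxne (by rw [hconst x hxI, hb0])
end CNonneg


theorem stmt_13 (p r : ℝ → ℝ) (c lam : ℝ)
    (hpc : ContinuousOn p (Icc 0 1)) (hrc : ContinuousOn r (Icc 0 1))
    (hp : ∀ x ∈ Icc (0:ℝ) 1, 0 < p x) (hr : ∀ x ∈ Icc (0:ℝ) 1, 0 < r x)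
    (hlam : lam < 0) (y₁ y₂ : ℝ → ℝ)
    (hy₁ : SolT p r c lam y₁) (hnt₁ : Nontriv y₁) (hbc₁ : BC1 y₁)
    (hy₂ : SolT p r c lam y₂) (hnt₂ : Nontriv y₂) (hbc₂ : BC1 y₂) :
    LinDep y₁ y₂ := by
  rcases le_or_gt 0 c with hc | hc
  · exact absurd (no_sol_c_nonneg hp hr hc hlam hy₁ hnt₁ hbc₁) (fun h => h.elim)
  -- case c < 0
  have mem0 : (0:ℝ) ∈ Set.Icc (0:ℝ) 1 := by norm_num
  have hp0 : (0:ℝ) < p 0 := hp 0 mem0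
  -- continuity and positivity of system coefficients
  have cq : ContinuousOn (fun x => (p x)⁻¹) (Set.Icc (0:ℝ) 1) :=
    hpc.inv₀ (fun x hx => (hp x hx).ne')
  have cs : ContinuousOn (fun x => lam * c * r x) (Set.Icc (0:ℝ) 1) :=
    continuousOn_const.mul hrc
  have ct : ContinuousOn (fun x => -lam * (p x)⁻¹) (Set.Icc (0:ℝ) 1) :=
    continuousOn_const.mul cq
  have hq : ∀ x ∈ Set.Icc (0:ℝ) 1, 0 < (p x)⁻¹ := fun x hx => inv_pos.2 (hp x hx)
  have hs : ∀ x ∈ Set.Icc (0:ℝ) 1, 0 ≤ lam * c * r x :=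
    fun x hx => (mul_pos (mul_pos_of_neg_of_neg hlam hc) (hr x hx)).le
  have ht : ∀ x ∈ Set.Icc (0:ℝ) 1, 0 < -lam * (p x)⁻¹ :=
    fun x hx => mul_pos (by linarith) (inv_pos.2 (hp x hx))
  have sys₁ := sol_sys hp hy₁
  have sys₂ := sol_sys hp hy₂
  obtain ⟨hb10, hb11, hb12, hb13⟩ := hbc₁
  obtain ⟨hb20, hb21, hb22, hb23⟩ := hbc₂
  -- second derivative of y₂ at 0 is nonzero
  have hb₂ : Dv (Dv y₂) 0 ≠ 0 := by
    intro hzero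
    have hvan := sys₂.vanish cq cs ct hq hs ht hb20 hb21
      (by simp [hzero]) hb22
    obtain ⟨x, hxI, hxne⟩ := hnt₂
    exact hxne (hvan x hxI)
  -- the combination b₂ y₁ - b₁ y₂ vanishes identically
  have comb := Sys.comb (Dv (Dv y₂) 0) (-(Dv (Dv y₁) 0)) sys₁ sys₂
  have hvan := comb.vanish cq cs ct hq hs ht
    (by simp [hb10, hb20]) (by simp [hb11, hb21]) (by simp; ring)
    (by simp [hb12, hb22])
  refine ⟨Dv (Dv y₂) 0, -(Dv (Dv y₁) 0), Or.inl hb₂, fun x hx => ?_⟩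
  have := hvan x hx
  simpa using this
end

section
/- Let p, r : [0,1] → ℝ be continuous with p(x) > 0 and r(x) > 0 for all x ∈ [0,1], and let c, α ∈ ℝ. If λ < 0 and y₁, y₂ are nontrivial classical solutions of (p·y'')'' − λ·(−y'' + c·r·y) = 0 both satisfying y(0) = y'(0) = y'(1) = 0 and (p·y'')'(1) + λ·α·y(1) = 0, then y₁ and y₂ are linearly dependent; i.e., every negative eigenvalue of this boundary-value problem has geometric multiplicity 1. -/
open Set

/-! ### Auxiliary material -/

section Aux

lemma udo01 : UniqueDiffOn ℝ (Icc (0:ℝ) 1) := uniqueDiffOn_Icc one_pos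

lemma hda_of_within {f g : ℝ → ℝ}
    (h : ∀ x ∈ Icc (0:ℝ) 1, HasDerivWithinAt f (g x) (Icc 0 1) x)
    {x : ℝ} (hx : x ∈ Ioo (0:ℝ) 1) : HasDerivAt f (g x) x :=
  (h x (Ioo_subset_Icc_self hx)).hasDerivAt (Icc_mem_nhds hx.1 hx.2)

lemma bound2 {k K x y : ℝ} (h1 : -K ≤ k) (h2 : k ≤ K) :
    -(K * (x^2 + y^2)) ≤ 2 * (k * (x * y)) := by
  nlinarith [mul_nonneg (sub_nonneg.2 h2) (sq_nonneg (x + y)),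
             mul_nonneg (sub_nonneg.2 (neg_le.1 h1)) (sq_nonneg (x - y))]

lemma dv_congr_on {f g : ℝ → ℝ} (h : ∀ y ∈ Icc (0:ℝ) 1, f y = g y) {x : ℝ}
    (hx : x ∈ Icc (0:ℝ) 1) : Dv f x = Dv g x := derivWithin_congr h (h x hx)

lemma dv_comb {f g : ℝ → ℝ} (hf : DifferentiableOn ℝ f (Icc 0 1))
    (hg : DifferentiableOn ℝ g (Icc 0 1)) (a b : ℝ) :
    ∀ x ∈ Icc (0:ℝ) 1, Dv (fun t => a * f t + b * g t) x = a * Dv f x + b * Dv g x := by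
  intro x hx
  unfold Dv
  rw [derivWithin_fun_add ((hf x hx).const_mul a) ((hg x hx).const_mul b),
      derivWithin_const_mul a (hf x hx),
      derivWithin_const_mul b (hg x hx)]

/-- Basic differentiability/continuity facts extracted from `SolT`. -/
lemma solt_facts {p r : ℝ → ℝ} {c lam : ℝ} {z : ℝ → ℝ} (hz : SolT p r c lam z) :
    ContinuousOn z (Icc 0 1) ∧
    (∀ x ∈ Icc (0:ℝ) 1, HasDerivWithinAt z (Dv z x) (Icc 0 1) x) ∧
    ContinuousOn (Dv z) (Icc 0 1) ∧
    (∀ x ∈ Icc (0:ℝ) 1, HasDerivWithinAt (Dv z) (Dv (Dv z) x) (Icc 0 1) x) ∧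
    ContinuousOn (fun t => p t * Dv (Dv z) t) (Icc 0 1) ∧
    (∀ x ∈ Icc (0:ℝ) 1, HasDerivWithinAt (fun t => p t * Dv (Dv z) t)
        (Dv (fun t => p t * Dv (Dv z) t) x) (Icc 0 1) x) ∧
    ContinuousOn (Dv (fun t => p t * Dv (Dv z) t)) (Icc 0 1) ∧
    (∀ x ∈ Icc (0:ℝ) 1, HasDerivWithinAt (Dv (fun t => p t * Dv (Dv z) t))
        (lam * (-(Dv (Dv z) x) + c * r x * z x)) (Icc 0 1) x) := by
  obtain ⟨h1, h2, h3⟩ := hz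
  have d1 : DifferentiableOn ℝ z (Icc 0 1) := h1.differentiableOn (by norm_num)
  have cd1 : ContDiffOn ℝ 1 (Dv z) (Icc 0 1) := h1.derivWithin udo01 (by norm_num)
  have d2 : DifferentiableOn ℝ (Dv z) (Icc 0 1) := cd1.differentiableOn one_ne_zero
  have dW : DifferentiableOn ℝ (fun t => p t * Dv (Dv z) t) (Icc 0 1) :=
    h2.differentiableOn (by norm_num)
  have cdW1 : ContDiffOn ℝ 1 (Dv (fun t => p t * Dv (Dv z) t)) (Icc 0 1) :=
    h2.derivWithin udo01 (by norm_num)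
  have dW2 : DifferentiableOn ℝ (Dv (fun t => p t * Dv (Dv z) t)) (Icc 0 1) :=
    cdW1.differentiableOn one_ne_zero
  refine ⟨h1.continuousOn, fun x hx => (d1 x hx).hasDerivWithinAt, cd1.continuousOn,
    fun x hx => (d2 x hx).hasDerivWithinAt, h2.continuousOn,
    fun x hx => (dW x hx).hasDerivWithinAt, cdW1.continuousOn, fun x hx => ?_⟩
  have h4 := (dW2 x hx).hasDerivWithinAt
  have he : Dv (Dv (fun t => p t * Dv (Dv z) t)) x
      = lam * (-(Dv (Dv z) x) + c * r x * z x) := by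
    have := h3 x hx; linarith
  rw [← he]
  exact h4

/-- Maximal point of `[0,1]` where a continuous function is `≤ 0`. -/
lemma exists_max_le_zero {f : ℝ → ℝ} (hf : ContinuousOn f (Icc 0 1))
    (hne : ∃ x ∈ Icc (0:ℝ) 1, f x ≤ 0) :
    ∃ x₁ ∈ Icc (0:ℝ) 1, f x₁ ≤ 0 ∧ ∀ t, x₁ < t → t ∈ Icc (0:ℝ) 1 → 0 < f t := by
  set g : ℝ → ℝ := fun x => f (max 0 (min 1 x)) with hg
  have hproj : ∀ x : ℝ, max 0 (min 1 x) ∈ Icc (0:ℝ) 1 :=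
    fun x => ⟨le_max_left _ _, max_le zero_le_one (min_le_left _ _)⟩
  have hgc : Continuous g :=
    hf.comp_continuous (continuous_const.max (continuous_const.min continuous_id)) hproj
  have hgf : ∀ x ∈ Icc (0:ℝ) 1, g x = f x := by
    intro x hx
    simp only [hg]
    rw [min_eq_right hx.2, max_eq_right hx.1]
  have hTc : IsCompact (Icc (0:ℝ) 1 ∩ {x | g x ≤ 0}) :=
    isCompact_Icc.inter_right (isClosed_le hgc continuous_const)
  have hTne : (Icc (0:ℝ) 1 ∩ {x | g x ≤ 0}).Nonempty := by
    obtain ⟨x, hx, hfx⟩ := hne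
    exact ⟨x, hx, by rw [mem_setOf_eq, hgf x hx]; exact hfx⟩
  have hsup := hTc.sSup_mem hTne
  refine ⟨sSup (Icc (0:ℝ) 1 ∩ {x | g x ≤ 0}), hsup.1, ?_, ?_⟩
  · rw [← hgf _ hsup.1]; exact hsup.2
  · intro t hlt ht
    by_contra hle
    push_neg at hle
    have hmem : t ∈ Icc (0:ℝ) 1 ∩ {x | g x ≤ 0} :=
      ⟨ht, by rw [mem_setOf_eq, hgf t ht]; exact hle⟩
    have := le_csSup hTc.bddAbove hmem
    linarith

/-- Linear dependence of two vectors in `ℝ²` with vanishing determinant. -/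
lemma dep_vec {u₁ β₁ u₂ β₂ : ℝ} (hd : u₁ * β₂ - u₂ * β₁ = 0) :
    ∃ a b : ℝ, (a ≠ 0 ∨ b ≠ 0) ∧ a * u₁ + b * u₂ = 0 ∧ a * β₁ + b * β₂ = 0 := by
  by_cases hu : u₁ = 0
  · by_cases hβ : β₁ = 0
    · exact ⟨1, 0, Or.inl one_ne_zero, by rw [hu]; ring, by rw [hβ]; ring⟩
    · have hu2 : u₂ = 0 := by
        have h0 : u₂ * β₁ = 0 := by rw [hu] at hd; linarith
        rcases mul_eq_zero.1 h0 with h | h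
        · exact h
        · exact absurd h hβ
      refine ⟨β₂ / β₁, -1, Or.inr (by norm_num), by rw [hu, hu2]; ring, ?_⟩
      field_simp
      ring
  · refine ⟨u₂ / u₁, -1, Or.inr (by norm_num), by field_simp; ring, ?_⟩
    field_simp
    linear_combination -hd

end Aux

section Key

/-- If all four boundary data of a solution vanish at `x = 1`, the solution vanishes
identically (backward Gronwall-type argument). -/
lemma key_zero {p r : ℝ → ℝ} {c lam : ℝ} {z : ℝ → ℝ}
    (hpc : ContinuousOn p (Icc 0 1)) (hrc : ContinuousOn r (Icc 0 1))
    (hp : ∀ x ∈ Icc (0:ℝ) 1, 0 < p x) (hr : ∀ x ∈ Icc (0:ℝ) 1, 0 < r x)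
    (hz : SolT p r c lam z)
    (h10 : z 1 = 0) (h11 : Dv z 1 = 0)
    (h12 : p 1 * Dv (Dv z) 1 = 0)
    (h13 : Dv (fun t => p t * Dv (Dv z) t) 1 = 0) :
    ∀ x ∈ Icc (0:ℝ) 1, z x = 0 := by
  obtain ⟨hc0, hd1, hc1, hd2, hcv, hdv, hcw, hdw⟩ := solt_facts hz
  obtain ⟨x₀, hx₀, hmin⟩ := isCompact_Icc.exists_isMinOn (nonempty_Icc.2 zero_le_one) hpc
  obtain ⟨x₂, hx₂, hmax⟩ := isCompact_Icc.exists_isMaxOn (nonempty_Icc.2 zero_le_one) hrc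
  have hPm0 : 0 < p x₀ := hp _ hx₀
  have hRm0 : 0 ≤ r x₂ := (hr _ hx₂).le
  set φ : ℝ → ℝ := fun t => z t ^ 2 + Dv z t ^ 2 + (p t * Dv (Dv z) t) ^ 2
      + Dv (fun u => p u * Dv (Dv z) u) t ^ 2 with hφdef
  set φ' : ℝ → ℝ := fun t => 2 * z t * Dv z t + 2 * Dv z t * Dv (Dv z) t
      + 2 * (p t * Dv (Dv z) t) * Dv (fun u => p u * Dv (Dv z) u) t
      + 2 * Dv (fun u => p u * Dv (Dv z) u) t * (lam * (-(Dv (Dv z) t) + c * r t * z t))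
    with hφ'def
  have hder : ∀ x ∈ Icc (0:ℝ) 1, HasDerivWithinAt φ (φ' x) (Icc 0 1) x := by
    intro x hx
    have H := ((((hd1 x hx).pow 2).add ((hd2 x hx).pow 2)).add
      ((hdv x hx).pow 2)).add ((hdw x hx).pow 2)
    have e : φ' x = ((2:ℕ) * z x ^ (2-1) * Dv z x + (2:ℕ) * Dv z x ^ (2-1) * Dv (Dv z) x
        + (2:ℕ) * (p x * Dv (Dv z) x) ^ (2-1) * Dv (fun t => p t * Dv (Dv z) t) x)
        + (2:ℕ) * Dv (fun t => p t * Dv (Dv z) t) x ^ (2-1)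
          * (lam * (-(Dv (Dv z) x) + c * r x * z x)) := by
      simp only [hφ'def]
      push_cast
      ring
    rw [e]
    exact H
  -- the differential inequality
  set Q : ℝ := 1 / p x₀ with hQdef
  have hQ0 : 0 ≤ Q := by rw [hQdef]; positivity
  have hineq : ∀ x ∈ Icc (0:ℝ) 1,
      0 ≤ φ' x + (2 + (1 + |lam|) * Q + |lam| * |c| * r x₂) * φ x := by
    intro x hx
    have hP := hp x hx
    have hPle : p x₀ ≤ p x := hmin hx
    have hR := hr x hx
    have hRle : r x ≤ r x₂ := hmax hx
    simp only [hφdef, hφ'def]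
    set a := z x with ha
    set b := Dv z x with hb
    set m := Dv (Dv z) x with hm
    set w := Dv (fun u => p u * Dv (Dv z) u) x with hw
    have hb1 : -(1 * (a^2 + b^2)) ≤ 2 * (1 * (a * b)) := bound2 (by norm_num) le_rfl
    have hpxQ : 1 / p x ≤ Q := by
      rw [hQdef]
      exact one_div_le_one_div_of_le hPm0 hPle
    have hb2' : -(Q * (b^2 + (p x * m)^2)) ≤ 2 * ((1 / p x) * (b * (p x * m))) := by
      refine bound2 ?_ hpxQ
      have h1 : (0:ℝ) < 1 / p x := by positivity
      linarith
    have hb2 : -(Q * (b^2 + (p x * m)^2)) ≤ 2 * (b * m) := by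
      have he : 2 * ((1 / p x) * (b * (p x * m))) = 2 * (b * m) := by
        field_simp
      linarith [hb2']
    have hb3 : -(1 * ((p x * m)^2 + w^2)) ≤ 2 * (1 * ((p x * m) * w)) :=
      bound2 (by norm_num) le_rfl
    have habs4 : |(-lam) / p x| ≤ |lam| * Q := by
      rw [hQdef, mul_one_div, abs_div, abs_neg, abs_of_pos hP]
      gcongr
    have hb4' : -((|lam| * Q) * (w^2 + (p x * m)^2))
        ≤ 2 * (((-lam) / p x) * (w * (p x * m))) :=
      bound2 (abs_le.1 habs4).1 (abs_le.1 habs4).2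
    have hb4 : -((|lam| * Q) * (w^2 + (p x * m)^2)) ≤ 2 * (w * (lam * (-m))) := by
      have he : 2 * (((-lam) / p x) * (w * (p x * m))) = 2 * (w * (lam * (-m))) := by
        field_simp
      linarith [hb4']
    have habs5 : |lam * (c * r x)| ≤ |lam| * |c| * r x₂ := by
      rw [abs_mul, abs_mul, abs_of_pos hR, ← mul_assoc]
      gcongr
    have hb5' : -((|lam| * |c| * r x₂) * (w^2 + a^2)) ≤ 2 * ((lam * (c * r x)) * (w * a)) :=
      bound2 (abs_le.1 habs5).1 (abs_le.1 habs5).2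
    have hb5 : -((|lam| * |c| * r x₂) * (w^2 + a^2)) ≤ 2 * (w * (lam * (c * r x * a))) := by
      have he : 2 * ((lam * (c * r x)) * (w * a)) = 2 * (w * (lam * (c * r x * a))) := by ring
      linarith [hb5']
    have hsplit : 2 * w * (lam * (-m + c * r x * a))
        = 2 * (w * (lam * (-m))) + 2 * (w * (lam * (c * r x * a))) := by ring
    have hsq1 : (0:ℝ) ≤ a^2 := sq_nonneg a
    have hsq2 : (0:ℝ) ≤ b^2 := sq_nonneg b
    have hsq3 : (0:ℝ) ≤ (p x * m)^2 := sq_nonneg _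
    have hsq4 : (0:ℝ) ≤ w^2 := sq_nonneg w
    have hk4 : (0:ℝ) ≤ |lam| * Q := by positivity
    have hk5 : (0:ℝ) ≤ |lam| * |c| * r x₂ := by positivity
    have hq2 : Q * (b^2 + (p x * m)^2)
        ≤ Q * (a^2 + b^2 + (p x * m)^2 + w^2) := by
      apply mul_le_mul_of_nonneg_left _ hQ0
      linarith
    have hq4 : (|lam| * Q) * (w^2 + (p x * m)^2)
        ≤ (|lam| * Q) * (a^2 + b^2 + (p x * m)^2 + w^2) := by
      apply mul_le_mul_of_nonneg_left _ hk4
      linarith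
    have hq5 : (|lam| * |c| * r x₂) * (w^2 + a^2)
        ≤ (|lam| * |c| * r x₂) * (a^2 + b^2 + (p x * m)^2 + w^2) := by
      apply mul_le_mul_of_nonneg_left _ hk5
      linarith
    linarith [hb1, hb2, hb3, hb4, hb5, hq2, hq4, hq5, hsplit, hsq1, hsq2, hsq3, hsq4]
  set C : ℝ := 2 + (1 + |lam|) * Q + |lam| * |c| * r x₂ with hCdef
  have hφ1 : φ 1 = 0 := by
    simp only [hφdef]
    rw [h10, h11, h12, h13]
    norm_num
  have hφnonneg : ∀ x : ℝ, 0 ≤ φ x := by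
    intro x
    simp only [hφdef]
    positivity
  set ψ : ℝ → ℝ := fun t => φ t * Real.exp (C * t) with hψdef
  have hψd : ∀ x ∈ Ioo (0:ℝ) 1,
      HasDerivAt ψ (φ' x * Real.exp (C * x) + φ x * (Real.exp (C * x) * C)) x := by
    intro x hx
    have h1 : HasDerivAt φ (φ' x) x :=
      (hder x (Ioo_subset_Icc_self hx)).hasDerivAt (Icc_mem_nhds hx.1 hx.2)
    have h2 : HasDerivAt (fun t : ℝ => C * t) C x := by
      simpa using (hasDerivAt_id x).const_mul C
    exact h1.mul h2.exp
  have hψcont : ContinuousOn ψ (Icc 0 1) := by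
    apply ContinuousOn.mul
    · simp only [hφdef]
      exact (((hc0.pow 2).add (hc1.pow 2)).add ((hcv.pow 2))).add (hcw.pow 2)
    · exact (Real.continuous_exp.comp (continuous_const.mul continuous_id)).continuousOn
  have hmono : MonotoneOn ψ (Icc 0 1) := by
    apply monotoneOn_of_deriv_nonneg (convex_Icc 0 1) hψcont
    · intro x hx
      rw [interior_Icc] at hx
      exact (hψd x hx).differentiableAt.differentiableWithinAt
    · intro x hx
      rw [interior_Icc] at hx
      rw [(hψd x hx).deriv]
      have h1 := hineq x (Ioo_subset_Icc_self hx)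
      have h2 := Real.exp_pos (C * x)
      nlinarith [mul_nonneg h1 h2.le]
  intro x hx
  have h1 : ψ x ≤ ψ 1 := hmono hx (right_mem_Icc.2 zero_le_one) hx.2
  have h2 : ψ 1 = 0 := by
    simp only [hψdef]
    rw [hφ1]
    ring
  have h3 := hφnonneg x
  have h4 := Real.exp_pos (C * x)
  have hφx : φ x = 0 := by
    have h5 : φ x * Real.exp (C * x) ≤ 0 := by
      have : ψ x = φ x * Real.exp (C * x) := rfl
      linarith [h1, h2, this.ge]
    nlinarith
  have hz2 : z x ^ 2 = 0 := by
    simp only [hφdef] at hφx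
    nlinarith [sq_nonneg (Dv z x), sq_nonneg (p x * Dv (Dv z) x),
      sq_nonneg (Dv (fun u => p u * Dv (Dv z) u) x), sq_nonneg (z x)]
  exact pow_eq_zero_iff two_ne_zero |>.1 hz2

end Key

/-- Case `c ≥ 0` and `c < 0` contradiction: a solution with
`z(0)=z'(0)=z(1)=z'(1)=((pz'')')(1)=0` but `(pz'')(1) > 0` cannot exist when `lam < 0`. -/
lemma key_contra {p r : ℝ → ℝ} {c lam : ℝ} {z : ℝ → ℝ}
    (hp : ∀ x ∈ Icc (0:ℝ) 1, 0 < p x) (hr : ∀ x ∈ Icc (0:ℝ) 1, 0 < r x)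
    (hlam : lam < 0) (hz : SolT p r c lam z)
    (h00 : z 0 = 0) (h01 : Dv z 0 = 0)
    (h10 : z 1 = 0) (h11 : Dv z 1 = 0)
    (h13 : Dv (fun t => p t * Dv (Dv z) t) 1 = 0)
    (hβ : 0 < p 1 * Dv (Dv z) 1) : False := by
  obtain ⟨hc0, hd1, hc1, hd2, hcv, hdv, hcw, hdw⟩ := solt_facts hz
  have h0m : (0:ℝ) ∈ Icc (0:ℝ) 1 := ⟨le_refl 0, zero_le_one⟩
  have h1m : (1:ℝ) ∈ Icc (0:ℝ) 1 := ⟨zero_le_one, le_refl 1⟩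
  rcases le_or_gt 0 c with hc | hc
  · -- c ≥ 0 : monotonicity of `F`
    set F : ℝ → ℝ := fun t => Dv (fun u => p u * Dv (Dv z) u) t * z t
        - (p t * Dv (Dv z) t) * Dv z t + lam * (z t * Dv z t) with hFdef
    set G : ℝ → ℝ := fun t => lam * c * r t * z t ^ 2 + lam * Dv z t ^ 2
        - p t * Dv (Dv z) t ^ 2 with hGdef
    have hFd : ∀ x ∈ Icc (0:ℝ) 1, HasDerivWithinAt F (G x) (Icc 0 1) x := by
      intro x hx
      have H := (((hdw x hx).mul (hd1 x hx)).sub ((hdv x hx).mul (hd2 x hx))).add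
        (((hd1 x hx).mul (hd2 x hx)).const_mul lam)
      have e : G x = (lam * (-(Dv (Dv z) x) + c * r x * z x) * z x
          + Dv (fun t => p t * Dv (Dv z) t) x * Dv z x
          - (Dv (fun t => p t * Dv (Dv z) t) x * Dv z x
            + (p x * Dv (Dv z) x) * Dv (Dv z) x))
          + lam * (Dv z x * Dv z x + z x * Dv (Dv z) x) := by
        simp only [hGdef]
        ring
      rw [e]
      exact H
    have hGle : ∀ x ∈ Ioo (0:ℝ) 1, G x ≤ 0 := by
      intro x hx
      have hxm := Ioo_subset_Icc_self hx
      have h1 : lam * c * r x * z x ^ 2 ≤ 0 := by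
        have : 0 ≤ c * r x * z x ^ 2 :=
          mul_nonneg (mul_nonneg hc (hr x hxm).le) (sq_nonneg _)
        nlinarith
      have h2 : lam * Dv z x ^ 2 ≤ 0 := by nlinarith [sq_nonneg (Dv z x)]
      have h3 : 0 ≤ p x * Dv (Dv z) x ^ 2 :=
        mul_nonneg (hp x hxm).le (sq_nonneg _)
      simp only [hGdef]
      linarith
    have hFcont : ContinuousOn F (Icc 0 1) := by
      simp only [hFdef]
      exact ((hcw.mul hc0).sub (hcv.mul hc1)).add (continuousOn_const.mul (hc0.mul hc1))
    have hFanti : AntitoneOn F (Icc 0 1) := by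
      apply antitoneOn_of_deriv_nonpos (convex_Icc 0 1) hFcont
      · intro x hx
        rw [interior_Icc] at hx
        exact (hda_of_within hFd hx).differentiableAt.differentiableWithinAt
      · intro x hx
        rw [interior_Icc] at hx
        rw [(hda_of_within hFd hx).deriv]
        exact hGle x hx
    have hF0 : F 0 = 0 := by
      simp only [hFdef]
      rw [h00, h01]
      ring
    have hF1 : F 1 = 0 := by
      simp only [hFdef]
      rw [h10, h11]
      ring
    have hFzero : ∀ x ∈ Icc (0:ℝ) 1, F x = 0 := by
      intro x hx
      have hle : F x ≤ F 0 := hFanti h0m hx hx.1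
      have hge : F 1 ≤ F x := hFanti hx h1m hx.2
      linarith
    have hd0 : derivWithin F (Icc 0 1) 1 = 0 := by
      rw [derivWithin_congr hFzero (hFzero 1 h1m)]
      simp
    have hdG : derivWithin F (Icc 0 1) 1 = G 1 := (hFd 1 h1m).derivWithin (udo01 1 h1m)
    have hG1 : G 1 = 0 := by rw [← hdG]; exact hd0
    have hne : Dv (Dv z) 1 ≠ 0 := by
      intro h
      rw [h] at hβ
      simp at hβ
    have hp1 := hp 1 h1m
    simp only [hGdef] at hG1
    rw [h10, h11] at hG1
    have : 0 < p 1 * Dv (Dv z) 1 ^ 2 := by positivity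
    nlinarith [hG1]
  · -- c < 0 : backward positivity argument
    have chain : ∀ x₁, x₁ ∈ Ico (0:ℝ) 1 →
        (∀ t ∈ Ioc x₁ 1, 0 < p t * Dv (Dv z) t) →
        0 < z x₁ ∧ p 1 * Dv (Dv z) 1 < p x₁ * Dv (Dv z) x₁ := by
      intro x₁ hx₁ hv
      have hsub : Icc x₁ 1 ⊆ Icc (0:ℝ) 1 := Icc_subset_Icc hx₁.1 le_rfl
      have hIoo : Ioo x₁ 1 ⊆ Ioo (0:ℝ) 1 := fun t ht => ⟨lt_of_le_of_lt hx₁.1 ht.1, ht.2⟩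
      have hx₁m : x₁ ∈ Icc x₁ 1 := ⟨le_refl x₁, hx₁.2.le⟩
      have h1m' : (1:ℝ) ∈ Icc x₁ 1 := ⟨hx₁.2.le, le_refl 1⟩
      have hm2pos : ∀ t ∈ Ioo x₁ 1, 0 < Dv (Dv z) t := by
        intro t ht
        have h1 := hv t ⟨ht.1, ht.2.le⟩
        have h2 := hp t (hsub ⟨ht.1.le, ht.2.le⟩)
        nlinarith
      have hmono1 : StrictMonoOn (Dv z) (Icc x₁ 1) := by
        apply strictMonoOn_of_deriv_pos (convex_Icc _ _) (hc1.mono hsub)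
        intro t ht
        rw [interior_Icc] at ht
        rw [(hda_of_within hd2 (hIoo ht)).deriv]
        exact hm2pos t ht
      have hz'neg : ∀ t ∈ Ico x₁ 1, Dv z t < 0 := by
        intro t ht
        have := hmono1 ⟨ht.1, ht.2.le⟩ h1m' ht.2
        rw [h11] at this
        exact this
      have hanti : StrictAntiOn z (Icc x₁ 1) := by
        apply strictAntiOn_of_deriv_neg (convex_Icc _ _) (hc0.mono hsub)
        intro t ht
        rw [interior_Icc] at ht
        rw [(hda_of_within hd1 (hIoo ht)).deriv]
        exact hz'neg t ⟨ht.1.le, ht.2⟩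
      have hzpos : ∀ t ∈ Ico x₁ 1, 0 < z t := by
        intro t ht
        have := hanti ⟨ht.1, ht.2.le⟩ h1m' ht.2
        rw [h10] at this
        exact this
      have hD4pos : ∀ t ∈ Ioo x₁ 1, 0 < lam * (-(Dv (Dv z) t) + c * r t * z t) := by
        intro t ht
        have h1 := hm2pos t ht
        have h2 := hzpos t ⟨ht.1.le, ht.2⟩
        have h3 := hr t (hsub ⟨ht.1.le, ht.2.le⟩)
        have h4 : -(Dv (Dv z) t) + c * r t * z t < 0 := by
          have h5 : c * r t * z t < 0 :=
            mul_neg_of_neg_of_pos (mul_neg_of_neg_of_pos hc h3) h2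
          linarith
        exact mul_pos_of_neg_of_neg hlam h4
      have hmono2 : StrictMonoOn (Dv (fun u => p u * Dv (Dv z) u)) (Icc x₁ 1) := by
        apply strictMonoOn_of_deriv_pos (convex_Icc _ _) (hcw.mono hsub)
        intro t ht
        rw [interior_Icc] at ht
        rw [(hda_of_within hdw (hIoo ht)).deriv]
        exact hD4pos t ht
      have hwneg : ∀ t ∈ Ioo x₁ 1, Dv (fun u => p u * Dv (Dv z) u) t < 0 := by
        intro t ht
        have := hmono2 ⟨ht.1.le, ht.2.le⟩ h1m' ht.2
        rw [h13] at this
        exact this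
      have hanti2 : StrictAntiOn (fun u => p u * Dv (Dv z) u) (Icc x₁ 1) := by
        apply strictAntiOn_of_deriv_neg (convex_Icc _ _) (hcv.mono hsub)
        intro t ht
        rw [interior_Icc] at ht
        rw [(hda_of_within hdv (hIoo ht)).deriv]
        exact hwneg t ht
      exact ⟨hzpos x₁ ⟨le_refl x₁, hx₁.2⟩, hanti2 hx₁m h1m' hx₁.2⟩
    have hvpos : ∀ t ∈ Icc (0:ℝ) 1, 0 < p t * Dv (Dv z) t := by
      by_contra hcon
      push_neg at hcon
      obtain ⟨x₁, hx₁, hvx₁, hmax⟩ := exists_max_le_zero hcv hcon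
      have hx₁1 : x₁ < 1 := by
        rcases lt_or_eq_of_le hx₁.2 with h | h
        · exact h
        · rw [h] at hvx₁; linarith
      have := (chain x₁ ⟨hx₁.1, hx₁1⟩
        (fun t ht => hmax t ht.1 ⟨le_trans hx₁.1 ht.1.le, ht.2⟩)).2
      linarith
    have := (chain 0 ⟨le_refl 0, zero_lt_one⟩
      (fun t ht => hvpos t ⟨ht.1.le, ht.2⟩)).1
    rw [h00] at this
    exact lt_irrefl 0 this

/-- Linear combinations of solutions are solutions, with computable derivatives. -/
lemma combo {p r : ℝ → ℝ} {c lam : ℝ} {y₁ y₂ : ℝ → ℝ}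
    (hy₁ : SolT p r c lam y₁) (hy₂ : SolT p r c lam y₂) (a b : ℝ) :
    SolT p r c lam (fun x => a * y₁ x + b * y₂ x) ∧
    (∀ x ∈ Icc (0:ℝ) 1, Dv (fun t => a * y₁ t + b * y₂ t) x = a * Dv y₁ x + b * Dv y₂ x) ∧
    (∀ x ∈ Icc (0:ℝ) 1, Dv (Dv (fun t => a * y₁ t + b * y₂ t)) x
        = a * Dv (Dv y₁) x + b * Dv (Dv y₂) x) ∧
    (∀ x ∈ Icc (0:ℝ) 1, Dv (fun t => p t * Dv (Dv (fun u => a * y₁ u + b * y₂ u)) t) x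
        = a * Dv (fun t => p t * Dv (Dv y₁) t) x + b * Dv (fun t => p t * Dv (Dv y₂) t) x) := by
  obtain ⟨h11, h12, h13⟩ := hy₁
  obtain ⟨h21, h22, h23⟩ := hy₂
  have d1 : DifferentiableOn ℝ y₁ (Icc 0 1) := h11.differentiableOn (by norm_num)
  have d2 : DifferentiableOn ℝ y₂ (Icc 0 1) := h21.differentiableOn (by norm_num)
  have cd1 : ContDiffOn ℝ 1 (Dv y₁) (Icc 0 1) := h11.derivWithin udo01 (by norm_num)
  have cd2 : ContDiffOn ℝ 1 (Dv y₂) (Icc 0 1) := h21.derivWithin udo01 (by norm_num)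
  have e0 := dv_comb d1 d2 a b
  have e1 : ∀ x ∈ Icc (0:ℝ) 1, Dv (Dv (fun t => a * y₁ t + b * y₂ t)) x
      = a * Dv (Dv y₁) x + b * Dv (Dv y₂) x := by
    intro x hx
    rw [dv_congr_on (g := fun t => a * Dv y₁ t + b * Dv y₂ t) e0 hx,
      dv_comb (cd1.differentiableOn one_ne_zero) (cd2.differentiableOn one_ne_zero) a b x hx]
  have eW : ∀ x ∈ Icc (0:ℝ) 1, p x * Dv (Dv (fun t => a * y₁ t + b * y₂ t)) x
      = a * (p x * Dv (Dv y₁) x) + b * (p x * Dv (Dv y₂) x) := by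
    intro x hx
    rw [e1 x hx]
    ring
  have e3 : ∀ x ∈ Icc (0:ℝ) 1,
      Dv (fun t => p t * Dv (Dv (fun u => a * y₁ u + b * y₂ u)) t) x
      = a * Dv (fun t => p t * Dv (Dv y₁) t) x + b * Dv (fun t => p t * Dv (Dv y₂) t) x := by
    intro x hx
    rw [dv_congr_on (g := fun t => a * (p t * Dv (Dv y₁) t) + b * (p t * Dv (Dv y₂) t)) eW hx,
      dv_comb (h12.differentiableOn (by norm_num)) (h22.differentiableOn (by norm_num)) a b x hx]
  have hCz : ContDiffOn ℝ 2 (fun x => a * y₁ x + b * y₂ x) (Icc 0 1) :=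
    (contDiffOn_const.mul h11).add (contDiffOn_const.mul h21)
  have hCW : ContDiffOn ℝ 2
      (fun x => p x * Dv (Dv (fun t => a * y₁ t + b * y₂ t)) x) (Icc 0 1) := by
    apply ContDiffOn.congr ((contDiffOn_const.mul h12).add (contDiffOn_const.mul h22))
    intro x hx
    rw [eW x hx]
  refine ⟨⟨hCz, hCW, ?_⟩, e0, e1, e3⟩
  intro x hx
  have e4 : Dv (Dv (fun t => p t * Dv (Dv (fun u => a * y₁ u + b * y₂ u)) t)) x
      = a * Dv (Dv (fun t => p t * Dv (Dv y₁) t)) x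
        + b * Dv (Dv (fun t => p t * Dv (Dv y₂) t)) x := by
    have dW1 : DifferentiableOn ℝ (Dv (fun t => p t * Dv (Dv y₁) t)) (Icc 0 1) :=
      (h12.derivWithin udo01 (by norm_num)).differentiableOn one_ne_zero
    have dW2 : DifferentiableOn ℝ (Dv (fun t => p t * Dv (Dv y₂) t)) (Icc 0 1) :=
      (h22.derivWithin udo01 (by norm_num)).differentiableOn one_ne_zero
    rw [dv_congr_on (g := fun t => a * Dv (fun u => p u * Dv (Dv y₁) u) t
          + b * Dv (fun u => p u * Dv (Dv y₂) u) t) e3 hx,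
      dv_comb dW1 dW2 a b x hx]
  have o1 := h13 x hx
  have o2 := h23 x hx
  rw [e4, e1 x hx]
  show a * Dv (Dv (fun t => p t * Dv (Dv y₁) t)) x
      + b * Dv (Dv (fun t => p t * Dv (Dv y₂) t)) x
      - lam * (-(a * Dv (Dv y₁) x + b * Dv (Dv y₂) x)
        + c * r x * (a * y₁ x + b * y₂ x)) = 0
  linear_combination a * o1 + b * o2


theorem stmt_14 (p r : ℝ → ℝ) (c alpha lam : ℝ)
    (hpc : ContinuousOn p (Icc 0 1)) (hrc : ContinuousOn r (Icc 0 1))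
    (hp : ∀ x ∈ Icc (0:ℝ) 1, 0 < p x) (hr : ∀ x ∈ Icc (0:ℝ) 1, 0 < r x)
    (hlam : lam < 0) (y₁ y₂ : ℝ → ℝ)
    (hy₁ : SolT p r c lam y₁) (hnt₁ : Nontriv y₁) (hbc₁ : BC2 p lam alpha y₁)
    (hy₂ : SolT p r c lam y₂) (hnt₂ : Nontriv y₂) (hbc₂ : BC2 p lam alpha y₂) :
    LinDep y₁ y₂ := by
  obtain ⟨hb10, hb11, hb12, hb13⟩ := hbc₁
  obtain ⟨hb20, hb21, hb22, hb23⟩ := hbc₂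
  have h1m : (1:ℝ) ∈ Icc (0:ℝ) 1 := ⟨zero_le_one, le_refl 1⟩
  have h0m : (0:ℝ) ∈ Icc (0:ℝ) 1 := ⟨le_refl 0, zero_le_one⟩
  by_cases hd : y₁ 1 * (p 1 * Dv (Dv y₂) 1) - y₂ 1 * (p 1 * Dv (Dv y₁) 1) = 0
  · -- boundary data at `1` are linearly dependent: some combination vanishes identically
    obtain ⟨a, b, hab, hu, hβ⟩ := dep_vec hd
    obtain ⟨hS, e0, e1, e3⟩ := combo hy₁ hy₂ a b
    have hz1 : (fun x => a * y₁ x + b * y₂ x) 1 = 0 := hu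
    have hz2 : Dv (fun t => a * y₁ t + b * y₂ t) 1 = 0 := by
      rw [e0 1 h1m, hb12, hb22]; ring
    have hz3 : p 1 * Dv (Dv (fun t => a * y₁ t + b * y₂ t)) 1 = 0 := by
      rw [e1 1 h1m]; linear_combination hβ
    have hz4 : Dv (fun t => p t * Dv (Dv (fun u => a * y₁ u + b * y₂ u)) t) 1 = 0 := by
      rw [e3 1 h1m]; linear_combination a * hb13 + b * hb23 - lam * alpha * hu
    exact ⟨a, b, hab, fun x hx => key_zero hpc hrc hp hr hS hz1 hz2 hz3 hz4 x hx⟩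
  · -- boundary data independent: impossible for `lam < 0`
    exfalso
    rcases lt_trichotomy
      (y₂ 1 * (p 1 * Dv (Dv y₁) 1) - y₁ 1 * (p 1 * Dv (Dv y₂) 1)) 0 with hs | hs | hs
    · -- use combination `(-(y₂ 1)) • y₁ + (y₁ 1) • y₂`
      obtain ⟨hS, e0, e1, e3⟩ := combo hy₁ hy₂ (-(y₂ 1)) (y₁ 1)
      refine key_contra hp hr hlam hS ?_ ?_ ?_ ?_ ?_ ?_
      · show -(y₂ 1) * y₁ 0 + y₁ 1 * y₂ 0 = 0
        rw [hb10, hb20]; ring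
      · rw [e0 0 h0m, hb11, hb21]; ring
      · show -(y₂ 1) * y₁ 1 + y₁ 1 * y₂ 1 = 0
        ring
      · rw [e0 1 h1m, hb12, hb22]; ring
      · rw [e3 1 h1m]
        linear_combination (-(y₂ 1)) * hb13 + y₁ 1 * hb23
      · rw [e1 1 h1m]
        have he : p 1 * (-(y₂ 1) * Dv (Dv y₁) 1 + y₁ 1 * Dv (Dv y₂) 1)
            = -(y₂ 1 * (p 1 * Dv (Dv y₁) 1) - y₁ 1 * (p 1 * Dv (Dv y₂) 1)) := by ring
        rw [he]
        linarith
    · exact hd (by linarith)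
    · -- use combination `(y₂ 1) • y₁ + (-(y₁ 1)) • y₂`
      obtain ⟨hS, e0, e1, e3⟩ := combo hy₁ hy₂ (y₂ 1) (-(y₁ 1))
      refine key_contra hp hr hlam hS ?_ ?_ ?_ ?_ ?_ ?_
      · show y₂ 1 * y₁ 0 + -(y₁ 1) * y₂ 0 = 0
        rw [hb10, hb20]; ring
      · rw [e0 0 h0m, hb11, hb21]; ring
      · show y₂ 1 * y₁ 1 + -(y₁ 1) * y₂ 1 = 0
        ring
      · rw [e0 1 h1m, hb12, hb22]; ring
      · rw [e3 1 h1m]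
        linear_combination y₂ 1 * hb13 + (-(y₁ 1)) * hb23
      · rw [e1 1 h1m]
        have he : p 1 * (y₂ 1 * Dv (Dv y₁) 1 + -(y₁ 1) * Dv (Dv y₂) 1)
            = y₂ 1 * (p 1 * Dv (Dv y₁) 1) - y₁ 1 * (p 1 * Dv (Dv y₂) 1) := by ring
        rw [he]
        linarith
end
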